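/- arXiv:2306.06714 — 5 statements merged into one kernel-verified Lean document; each statement's English description precedes it below -/
import Mathlib

section
/- For every n ≥ 2, the length (number of edges, counted with multiplicity) of a shortest walk in the complete graph K_n that visits every edge of K_n at least once equals (n²−n)/2 if n is odd, and (n²−2)/2 if n is even. -/
open SimpleGraph

/-- An `l`-track on `G`: a surjective function whose consecutive values are adjacent. -/
def IsTrack {V : Type*} (G : SimpleGraph V) {l : ℕ} (f : Fin l → V) : Prop :=
  Function.Surjective f ∧
    ∀ i : ℕ, ∀ hi : i + 1 < l, G.Adj (f ⟨i, Nat.lt_of_succ_lt hi⟩) (f ⟨i + 1, hi⟩)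

/-- A lazy `l`-track on `G`: consecutive values are adjacent or equal. -/
def IsLazyTrack {V : Type*} (G : SimpleGraph V) {l : ℕ} (f : Fin l → V) : Prop :=
  Function.Surjective f ∧
    ∀ i : ℕ, ∀ hi : i + 1 < l,
      G.Adj (f ⟨i, Nat.lt_of_succ_lt hi⟩) (f ⟨i + 1, hi⟩) ∨
        f ⟨i, Nat.lt_of_succ_lt hi⟩ = f ⟨i + 1, hi⟩

/-- The condition that every edge of `G` is traversed by `f`. -/
def SweepCond {V : Type*} (G : SimpleGraph V) {l : ℕ} (f : Fin l → V) : Prop :=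
  ∀ e ∈ G.edgeSet, ∃ i : ℕ, ∃ hi : i + 1 < l,
    e = s(f ⟨i, Nat.lt_of_succ_lt hi⟩, f ⟨i + 1, hi⟩)

/-- An `l`-sweep on `G`: an `l`-track traversing every edge. -/
def IsSweep {V : Type*} (G : SimpleGraph V) {l : ℕ} (f : Fin l → V) : Prop :=
  IsTrack G f ∧ SweepCond G f

/-- A lazy `l`-sweep on `G`: a lazy `l`-track traversing every edge. -/
def IsLazySweep {V : Type*} (G : SimpleGraph V) {l : ℕ} (f : Fin l → V) : Prop :=
  IsLazyTrack G f ∧ SweepCond G f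

/-- `f` and `g` are opposite: at each step exactly `f` moves iff `g` stays. -/
def IsOpposite {V : Type*} (G : SimpleGraph V) {l : ℕ} (f g : Fin l → V) : Prop :=
  ∀ i : ℕ, ∀ hi : i + 1 < l,
    (G.Adj (f ⟨i, Nat.lt_of_succ_lt hi⟩) (f ⟨i + 1, hi⟩) ↔
      g ⟨i, Nat.lt_of_succ_lt hi⟩ = g ⟨i + 1, hi⟩)

/-- The distance `m_G(f,g)`: minimal distance between simultaneous positions. -/
noncomputable def mDist {V : Type*} (G : SimpleGraph V) {l : ℕ} (f g : Fin l → V) : ℕ :=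
  sInf {d | ∃ i : Fin l, G.dist (f i) (g i) = d}

/-- Strong vertex span `σ⊠_V(G)`. -/
noncomputable def strongVertexSpan {V : Type*} (G : SimpleGraph V) : ℕ :=
  sSup {d | ∃ (l : ℕ) (f g : Fin l → V), IsLazyTrack G f ∧ IsLazyTrack G g ∧ mDist G f g = d}

/-- Direct vertex span `σ×_V(G)`. -/
noncomputable def directVertexSpan {V : Type*} (G : SimpleGraph V) : ℕ :=
  sSup {d | ∃ (l : ℕ) (f g : Fin l → V), IsTrack G f ∧ IsTrack G g ∧ mDist G f g = d}

/-- Cartesian vertex span `σ□_V(G)`. -/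
noncomputable def cartesianVertexSpan {V : Type*} (G : SimpleGraph V) : ℕ :=
  sSup {d | ∃ (l : ℕ) (f g : Fin l → V),
    IsLazyTrack G f ∧ IsLazyTrack G g ∧ IsOpposite G f g ∧ mDist G f g = d}

/-- Strong edge span `σ⊠_E(G)`. -/
noncomputable def strongEdgeSpan {V : Type*} (G : SimpleGraph V) : ℕ :=
  sSup {d | ∃ (l : ℕ) (f g : Fin l → V), IsLazySweep G f ∧ IsLazySweep G g ∧ mDist G f g = d}

/-- Direct edge span `σ×_E(G)`. -/
noncomputable def directEdgeSpan {V : Type*} (G : SimpleGraph V) : ℕ :=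
  sSup {d | ∃ (l : ℕ) (f g : Fin l → V), IsSweep G f ∧ IsSweep G g ∧ mDist G f g = d}

/-- Cartesian edge span `σ□_E(G)`. -/
noncomputable def cartesianEdgeSpan {V : Type*} (G : SimpleGraph V) : ℕ :=
  sSup {d | ∃ (l : ℕ) (f g : Fin l → V),
    IsLazySweep G f ∧ IsLazySweep G g ∧ IsOpposite G f g ∧ mDist G f g = d}

/-- `L⊠_V(G)`: minimal length of lazy tracks realizing the strong vertex span. -/
noncomputable def strongVertexL {V : Type*} (G : SimpleGraph V) : ℕ :=
  sInf {l | ∃ f g : Fin l → V,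
    IsLazyTrack G f ∧ IsLazyTrack G g ∧ mDist G f g = strongVertexSpan G}

/-- `L×_V(G)`. -/
noncomputable def directVertexL {V : Type*} (G : SimpleGraph V) : ℕ :=
  sInf {l | ∃ f g : Fin l → V,
    IsTrack G f ∧ IsTrack G g ∧ mDist G f g = directVertexSpan G}

/-- `L□_V(G)`. -/
noncomputable def cartesianVertexL {V : Type*} (G : SimpleGraph V) : ℕ :=
  sInf {l | ∃ f g : Fin l → V,
    IsLazyTrack G f ∧ IsLazyTrack G g ∧ IsOpposite G f g ∧ mDist G f g = cartesianVertexSpan G}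

/-- `L⊠_E(G)`. -/
noncomputable def strongEdgeL {V : Type*} (G : SimpleGraph V) : ℕ :=
  sInf {l | ∃ f g : Fin l → V,
    IsLazySweep G f ∧ IsLazySweep G g ∧ mDist G f g = strongEdgeSpan G}

/-- `L×_E(G)`. -/
noncomputable def directEdgeL {V : Type*} (G : SimpleGraph V) : ℕ :=
  sInf {l | ∃ f g : Fin l → V,
    IsSweep G f ∧ IsSweep G g ∧ mDist G f g = directEdgeSpan G}

/-- `L□_E(G)`. -/
noncomputable def cartesianEdgeL {V : Type*} (G : SimpleGraph V) : ℕ :=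
  sInf {l | ∃ f g : Fin l → V,
    IsLazySweep G f ∧ IsLazySweep G g ∧ IsOpposite G f g ∧ mDist G f g = cartesianEdgeSpan G}


def vOdd (n p : ℕ) : ℕ :=
  if p = 0 ∨ 2*n+1 ≤ p then 0
  else if p % 2 = 0 then p/2
  else if p % 4 = 1 then n+1 else n

lemma vOdd_lt (n p : ℕ) : vOdd n p < n + 2 := by
  unfold vOdd; split_ifs <;> first | omega | (simp_all; omega) | simp_all

def fOdd (n : ℕ) : ℕ → Fin (n+2) := fun p => ⟨vOdd n p, vOdd_lt n p⟩

lemma fOdd_val (n p : ℕ) : (fOdd n p).val = vOdd n p := rfl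

lemma walk_of_seq {V : Type*} (G : SimpleGraph V) (f : ℕ → V) (L : ℕ)
    (h : ∀ i < L, G.Adj (f i) (f (i+1))) :
    ∃ w : G.Walk (f 0) (f L), w.length = L ∧ ∀ i < L, s(f i, f (i+1)) ∈ w.edges := by
  induction L with
  | zero => exact ⟨.nil, rfl, by simp⟩
  | succ L ih =>
    obtain ⟨w, hl, he⟩ := ih (fun i hi => h i (by omega))
    refine ⟨w.concat (h L (by omega)), ?_, ?_⟩
    · simp [Walk.length_concat, hl]
    · intro i hi
      rw [Walk.edges_concat, List.concat_eq_append, List.mem_append]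
      rcases Nat.lt_or_ge i L with h' | h'
      · exact Or.inl (he i h')
      · have hiL : i = L := by omega
        subst hiL; simp

lemma odd_walk (k : ℕ) : ∃ w : (⊤ : SimpleGraph (Fin (2*k+3))).Walk 0 0,
    (∀ e ∈ (⊤ : SimpleGraph (Fin (2*k+3))).edgeSet, e ∈ w.edges) ∧
    w.length = ((2*k+3) ^ 2 - (2*k+3)) / 2 := by
  induction k with
  | zero =>
    set f : ℕ → Fin 3 := fun p => if p = 1 then 1 else if p = 2 then 2 else 0 with hf
    obtain ⟨w, hl, he⟩ := walk_of_seq (⊤ : SimpleGraph (Fin 3)) f 3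
      (by intro i hi; interval_cases i <;> simp [hf, top_adj] <;> decide)
    have hf0 : f 0 = 0 := by simp [hf]
    have hf3 : f 3 = 0 := by simp [hf]
    refine ⟨(w.copy hf0 hf3), ?_, ?_⟩
    · intro e hee
      induction e with
      | _ x y =>
        rw [mem_edgeSet, top_adj] at hee
        rw [Walk.edges_copy]
        have h0 := he 0 (by omega)
        have h1 := he 1 (by omega)
        have h2 := he 2 (by omega)
        simp only [hf] at h0 h1 h2
        norm_num at h0 h1 h2
        fin_cases x <;> fin_cases y <;> simp_all <;>
          first
          | exact h0
          | exact h1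
          | exact h2
          | (rw [Sym2.eq_swap]; assumption)
    · rw [Walk.length_copy, hl]; norm_num
  | succ k ih =>
    obtain ⟨w0, hcov0, hlen0⟩ := ih
    set n : ℕ := 2*k+3 with hn
    set emb : Fin n ↪ Fin (n+2) := Fin.castLEEmb (by omega : n ≤ n + 2) with hemb
    set hom := (SimpleGraph.Embedding.completeGraph emb).toHom with hhom
    have homval : ∀ x : Fin n, (hom x).val = x.val := fun x => rfl
    have hadj : ∀ i < 2*n+1, (⊤ : SimpleGraph (Fin (n+2))).Adj (fOdd n i) (fOdd n (i+1)) := by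
      intro i hi
      rw [top_adj]
      intro hcon
      have hv : vOdd n i = vOdd n (i+1) := congrArg Fin.val hcon
      unfold vOdd at hv
      split_ifs at hv <;> first | omega | (simp_all; omega) | simp_all
    obtain ⟨w2, hl2, he2⟩ := walk_of_seq _ (fOdd n) (2*n+1) hadj
    have hf0 : fOdd n 0 = (0 : Fin (n+2)) := by
      apply Fin.ext; rw [fOdd_val]; unfold vOdd; simp
    have hfL : fOdd n (2*n+1) = (0 : Fin (n+2)) := by
      apply Fin.ext; rw [fOdd_val]; unfold vOdd; simp
    have hhom0 : hom (0 : Fin n) = (0 : Fin (n+2)) := by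
      apply Fin.ext; rw [homval]; rfl
    set W := ((w0.map hom).copy hhom0 hhom0).append (w2.copy hf0 hfL) with hW
    have hWlen : W.length = ((2*(k+1)+3) ^ 2 - (2*(k+1)+3)) / 2 := by
      rw [hW, Walk.length_append, Walk.length_copy, Walk.length_copy, Walk.length_map,
        hlen0, hl2]
      have e1 : (2*k+3)^2 = 4*(k*k) + 12*k + 9 := by ring
      have e2 : (2*(k+1)+3)^2 = 4*(k*k) + 20*k + 25 := by ring
      omega
    refine ⟨W, ?_, hWlen⟩
    intro e hee
    induction e with
    | _ x y =>
      rw [mem_edgeSet, top_adj] at hee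
      have hxy : x.val ≠ y.val := fun h => hee (Fin.ext h)
      have hWe : W.edges = (w0.map hom).edges ++ w2.edges := by
        rw [hW, Walk.edges_append, Walk.edges_copy, Walk.edges_copy]
      have hnew : ∀ p, p < 2*n+1 → s(x, y) = s(fOdd n p, fOdd n (p+1)) → s(x,y) ∈ W.edges := by
        intro p hp hexy
        rw [hWe, List.mem_append]
        exact Or.inr (hexy ▸ he2 p hp)
      have key : ∀ (a b : Fin (n+2)), a.val ≠ b.val →
          (b.val = n ∨ b.val = n+1) → (a.val < n ∨ (a.val = n ∧ b.val = n+1)) →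
          ∃ p, p < 2*n+1 ∧ s(a, b) = s(fOdd n p, fOdd n (p+1)) := by
        intro a b hab hb ha
        rcases hb with hbn | hbn1
        · have han : a.val < n := by rcases ha with h | ⟨_, h⟩ <;> omega
          rcases Nat.eq_zero_or_pos a.val with h0 | hpos
          · refine ⟨2*n, by omega, ?_⟩
            rw [Sym2.eq_iff]
            right
            constructor <;> apply Fin.ext <;> rw [fOdd_val] <;> unfold vOdd <;>
              split_ifs <;> first | omega | (simp_all; omega) | simp_all
          · rcases Nat.even_or_odd a.val with hev | hod
            · refine ⟨2*a.val - 1, by omega, ?_⟩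
              have h2 : 2*a.val - 1 + 1 = 2*a.val := by omega
              rw [h2, Sym2.eq_iff]
              right
              rw [Nat.even_iff] at hev
              constructor <;> apply Fin.ext <;> rw [fOdd_val] <;> unfold vOdd <;>
                split_ifs <;> first | omega | (simp_all; omega) | simp_all
            · refine ⟨2*a.val, by omega, ?_⟩
              rw [Sym2.eq_iff]
              left
              rw [Nat.odd_iff] at hod
              constructor <;> apply Fin.ext <;> rw [fOdd_val] <;> unfold vOdd <;>
                split_ifs <;> first | omega | (simp_all; omega) | simp_all
        · rcases ha with han | ⟨han, _⟩
          · rcases Nat.even_or_odd a.val with hev | hod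
            · refine ⟨2*a.val, by omega, ?_⟩
              rw [Sym2.eq_iff]
              left
              rw [Nat.even_iff] at hev
              constructor <;> apply Fin.ext <;> rw [fOdd_val] <;> unfold vOdd <;>
                split_ifs <;> first | omega | (simp_all; omega) | simp_all
            · rw [Nat.odd_iff] at hod
              refine ⟨2*a.val - 1, by omega, ?_⟩
              have h2 : 2*a.val - 1 + 1 = 2*a.val := by omega
              rw [h2, Sym2.eq_iff]
              right
              constructor <;> apply Fin.ext <;> rw [fOdd_val] <;> unfold vOdd <;>
                split_ifs <;> first | omega | (simp_all; omega) | simp_all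
          · refine ⟨2*n - 1, by omega, ?_⟩
            have h2 : 2*n - 1 + 1 = 2*n := by omega
            rw [h2, Sym2.eq_iff]
            right
            constructor <;> apply Fin.ext <;> rw [fOdd_val] <;> unfold vOdd <;>
              split_ifs <;> first | omega | (simp_all; omega) | simp_all
      rcases Nat.lt_or_ge x.val n with hx | hx
      · rcases Nat.lt_or_ge y.val n with hy | hy
        · have hmem : s(⟨x.val, hx⟩, (⟨y.val, hy⟩ : Fin n)) ∈ w0.edges := by
            apply hcov0
            rw [mem_edgeSet, top_adj]
            intro h
            have h' : (⟨x.val, hx⟩ : Fin n).val = (⟨y.val, hy⟩ : Fin n).val := congrArg Fin.val h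
            exact hxy h'
          rw [hWe, List.mem_append]
          left
          rw [Walk.edges_map]
          refine List.mem_map.mpr ⟨_, hmem, ?_⟩
          rw [Sym2.map_pair_eq]
          have h1 : hom ⟨x.val, hx⟩ = x := Fin.ext (homval _)
          have h2 : hom ⟨y.val, hy⟩ = y := Fin.ext (homval _)
          rw [Sym2.eq_iff]
          exact Or.inl ⟨h1, h2⟩
        
        · obtain ⟨p, hp, heq⟩ := key x y hxy (by omega) (Or.inl hx)
          exact hnew p hp heq
      · rcases Nat.lt_or_ge y.val n with hy | hy
        · obtain ⟨p, hp, heq⟩ := key y x (Ne.symm hxy) (by omega) (Or.inl hy)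
          exact hnew p hp ((Sym2.eq_swap).trans heq)
        · rcases Nat.lt_or_ge x.val y.val with hlt | hge
          · obtain ⟨p, hp, heq⟩ := key x y hxy (by omega) (Or.inr (by omega))
            exact hnew p hp heq
          · obtain ⟨p, hp, heq⟩ := key y x (Ne.symm hxy) (by omega) (Or.inr (by omega))
            exact hnew p hp ((Sym2.eq_swap).trans heq)



def vEven (n b p : ℕ) : ℕ :=
  if p = 0 then b
  else if 2*n+2 ≤ p then n+1
  else if (p-1) % 2 = 1 then (p-1-1)/2
  else if (p-1) % 4 = 0 then n else n+1

lemma vEven_lt (n b p : ℕ) (hb : b < n + 2) : vEven n b p < n + 2 := by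
  unfold vEven; split_ifs <;> omega

def fEven (n : ℕ) (b : Fin n) (p : ℕ) : Fin (n+2) :=
  ⟨vEven n b.val p, vEven_lt n b.val p (Nat.lt_of_lt_of_le b.isLt (by omega))⟩

lemma fEven_val (n : ℕ) (b : Fin n) (p : ℕ) : (fEven n b p).val = vEven n b.val p := rfl

set_option maxHeartbeats 1000000 in
lemma even_walk (k : ℕ) : ∃ (a b : Fin (2*k+2)) (w : (⊤ : SimpleGraph (Fin (2*k+2))).Walk a b),
    (∀ e ∈ (⊤ : SimpleGraph (Fin (2*k+2))).edgeSet, e ∈ w.edges) ∧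
    w.length = ((2*k+2) ^ 2 - 2) / 2 := by
  induction k with
  | zero =>
    set f : ℕ → Fin 2 := fun p => if p = 0 then 0 else 1 with hf
    obtain ⟨w, hl, he⟩ := walk_of_seq (⊤ : SimpleGraph (Fin 2)) f 1
      (by intro i hi; interval_cases i <;> simp [hf, top_adj] <;> decide)
    refine ⟨f 0, f 1, w, ?_, by rw [hl]; norm_num⟩
    intro e hee
    induction e with
    | _ x y =>
      rw [mem_edgeSet, top_adj] at hee
      have h0 := he 0 (by omega)
      fin_cases x <;> fin_cases y <;> simp_all [hf] <;>
        first
        | exact he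
        | (rw [Sym2.eq_swap]; exact he)
  | succ k ih =>
    set n : ℕ := 2*k+2 with hn
    obtain ⟨a0, b0, w0, hcov0, hlen0⟩ := ih
    set emb : Fin n ↪ Fin (n+2) := Fin.castLEEmb (by omega : n ≤ n + 2) with hemb
    set hom := (SimpleGraph.Embedding.completeGraph emb).toHom with hhom
    have homval : ∀ x : Fin n, (hom x).val = x.val := fun x => rfl
    have hbval : b0.val < n := b0.isLt
    have hadj : ∀ i < 2*n+2, (⊤ : SimpleGraph (Fin (n+2))).Adj (fEven n b0 i) (fEven n b0 (i+1)) := by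
      intro i hi
      rw [top_adj]
      intro hcon
      have hv : vEven n b0.val i = vEven n b0.val (i+1) := congrArg Fin.val hcon
      unfold vEven at hv
      split_ifs at hv <;> first | omega | (simp_all; omega) | simp_all
    obtain ⟨w2, hl2, he2⟩ := walk_of_seq _ (fEven n b0) (2*n+2) hadj
    have hfb : fEven n b0 0 = hom b0 := by
      apply Fin.ext; rw [fEven_val, homval]; unfold vEven; simp
    set W := (w0.map hom).append (w2.copy hfb rfl) with hW
    have hWlen : W.length = ((2*(k+1)+2) ^ 2 - 2) / 2 := by
      rw [hW, Walk.length_append, Walk.length_copy, Walk.length_map, hlen0, hl2]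
      have e1 : n^2 = 4*(k*k) + 8*k + 4 := by rw [hn]; ring
      have e2 : (2*(k+1)+2)^2 = 4*(k*k) + 16*k + 16 := by ring
      omega
    refine ⟨hom a0, fEven n b0 (2*n+2), W, ?_, hWlen⟩
    intro e hee
    induction e with
    | _ x y =>
      rw [mem_edgeSet, top_adj] at hee
      have hxy : x.val ≠ y.val := fun h => hee (Fin.ext h)
      have hWe : W.edges = (w0.map hom).edges ++ w2.edges := by
        rw [hW, Walk.edges_append, Walk.edges_copy]
      have hnew : ∀ p, p < 2*n+2 → s(x, y) = s(fEven n b0 p, fEven n b0 (p+1)) →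
          s(x,y) ∈ W.edges := by
        intro p hp hexy
        rw [hWe, List.mem_append]
        exact Or.inr (hexy ▸ he2 p hp)
      have key : ∀ (a b : Fin (n+2)), a.val ≠ b.val →
          (b.val = n ∨ b.val = n+1) → (a.val < n ∨ (a.val = n ∧ b.val = n+1)) →
          ∃ p, p < 2*n+2 ∧ s(a, b) = s(fEven n b0 p, fEven n b0 (p+1)) := by
        intro a b hab hb ha
        rcases hb with hbn | hbn1
        · have han : a.val < n := by rcases ha with h | ⟨_, h⟩ <;> omega
          rcases Nat.even_or_odd a.val with hev | hod
          · -- a even : positions (2a+1, 2a+2) : (n, a)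
            rw [Nat.even_iff] at hev
            refine ⟨2*a.val+1, by omega, ?_⟩
            rw [Sym2.eq_iff]
            right
            constructor <;> apply Fin.ext <;> rw [fEven_val] <;> unfold vEven <;>
              split_ifs <;> first | omega | (simp_all; omega) | simp_all
          · -- a odd : positions (2a+2, 2a+3) : (a, n)
            rw [Nat.odd_iff] at hod
            refine ⟨2*a.val+2, by omega, ?_⟩
            rw [Sym2.eq_iff]
            left
            constructor <;> apply Fin.ext <;> rw [fEven_val] <;> unfold vEven <;>
              split_ifs <;> first | omega | (simp_all; omega) | simp_all
        · rcases ha with han | ⟨han, _⟩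
          · rcases Nat.even_or_odd a.val with hev | hod
            · -- a even : positions (2a+2, 2a+3) : (a, n+1)
              rw [Nat.even_iff] at hev
              refine ⟨2*a.val+2, by omega, ?_⟩
              rw [Sym2.eq_iff]
              left
              constructor <;> apply Fin.ext <;> rw [fEven_val] <;> unfold vEven <;>
                split_ifs <;> first | omega | (simp_all; omega) | simp_all
            · -- a odd : positions (2a+1, 2a+2) : (n+1, a)
              rw [Nat.odd_iff] at hod
              refine ⟨2*a.val+1, by omega, ?_⟩
              rw [Sym2.eq_iff]
              right
              constructor <;> apply Fin.ext <;> rw [fEven_val] <;> unfold vEven <;>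
                split_ifs <;> first | omega | (simp_all; omega) | simp_all
          · -- a = n, b = n+1 : positions (2n+1, 2n+2) : (n, n+1)
            refine ⟨2*n+1, by omega, ?_⟩
            rw [Sym2.eq_iff]
            left
            constructor <;> apply Fin.ext <;> rw [fEven_val] <;> unfold vEven <;>
              split_ifs <;> first | omega | (simp_all; omega) | simp_all
      rcases Nat.lt_or_ge x.val n with hx | hx
      · rcases Nat.lt_or_ge y.val n with hy | hy
        · have hmem : s(⟨x.val, hx⟩, (⟨y.val, hy⟩ : Fin n)) ∈ w0.edges := by
            apply hcov0
            rw [mem_edgeSet, top_adj]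
            intro h
            have h' : (⟨x.val, hx⟩ : Fin n).val = (⟨y.val, hy⟩ : Fin n).val := congrArg Fin.val h
            exact hxy h'
          rw [hWe, List.mem_append]
          left
          rw [Walk.edges_map]
          refine List.mem_map.mpr ⟨_, hmem, ?_⟩
          rw [Sym2.map_pair_eq]
          have h1 : hom ⟨x.val, hx⟩ = x := Fin.ext (homval _)
          have h2 : hom ⟨y.val, hy⟩ = y := Fin.ext (homval _)
          rw [Sym2.eq_iff]
          exact Or.inl ⟨h1, h2⟩
        · obtain ⟨p, hp, heq⟩ := key x y hxy (by omega) (Or.inl hx)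
          exact hnew p hp heq
      · rcases Nat.lt_or_ge y.val n with hy | hy
        · obtain ⟨p, hp, heq⟩ := key y x (Ne.symm hxy) (by omega) (Or.inl hy)
          exact hnew p hp ((Sym2.eq_swap).trans heq)
        · rcases Nat.lt_or_ge x.val y.val with hlt | hge
          · obtain ⟨p, hp, heq⟩ := key x y hxy (by omega) (Or.inr (by omega))
            exact hnew p hp heq
          · obtain ⟨p, hp, heq⟩ := key y x (Ne.symm hxy) (by omega) (Or.inr (by omega))
            exact hnew p hp ((Sym2.eq_swap).trans heq)


lemma parity_count {V : Type*} [DecidableEq V] {G : SimpleGraph V} {u v : V}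
    (w : G.Walk u v) (x : V) :
    w.edges.countP (fun e => x ∈ e) % 2
      = ((if x = u then 1 else 0) + (if x = v then 1 else 0)) % 2 := by
  induction w with
  | nil => simp only [Walk.edges_nil, List.countP_nil]; split_ifs <;> simp
  | @cons a b c hadj p ih =>
    rw [Walk.edges_cons, List.countP_cons]
    have hne : a ≠ b := hadj.ne
    have hm : (decide (x ∈ s(a,b)) = true) ↔ (x = a ∨ x = b) := by
      simp [Sym2.mem_iff]
    rcases Classical.em (x = a) with h1 | h1 <;> rcases Classical.em (x = b) with h2 | h2 <;>
      simp_all <;> omega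

lemma sum_count {n : ℕ} (E : List (Sym2 (Fin n)))
    (hE : ∀ e ∈ E, ¬ e.IsDiag) :
    ∑ x : Fin n, E.countP (fun e => x ∈ e) = 2 * E.length := by
  induction E with
  | nil => simp
  | cons e l ih =>
    have hel : ∀ e ∈ l, ¬ e.IsDiag := fun e he => hE e (List.mem_cons_of_mem _ he)
    induction e with
    | _ a b =>
      have hab : a ≠ b := by
        have := hE s(a,b) List.mem_cons_self
        simpa using this
      simp only [List.countP_cons, Finset.sum_add_distrib, ih hel, List.length_cons]
      have : ∑ x : Fin n, (if decide (x ∈ s(a,b)) = true then 1 else 0) = 2 := by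
        have : ∀ x : Fin n, (if decide (x ∈ s(a,b)) = true then 1 else 0)
            = (if x = a then 1 else 0) + (if x = b then 1 else 0) := by
          intro x
          by_cases h1 : x = a <;> by_cases h2 : x = b <;> simp_all [Sym2.mem_iff]
        rw [Finset.sum_congr rfl (fun x _ => this x)]
        rw [Finset.sum_add_distrib]
        simp
      rw [this]; ring

lemma count_ge {n : ℕ} {u v : Fin n} (w : (⊤ : SimpleGraph (Fin n)).Walk u v)
    (hcov : ∀ e ∈ (⊤ : SimpleGraph (Fin n)).edgeSet, e ∈ w.edges) (x : Fin n) :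
    n - 1 ≤ w.edges.countP (fun e => x ∈ e) := by
  classical
  set S : Finset (Sym2 (Fin n)) := (Finset.univ.erase x).image (fun y => s(x,y)) with hS
  have hcard : S.card = n - 1 := by
    rw [hS, Finset.card_image_of_injOn, Finset.card_erase_of_mem (Finset.mem_univ x)]
    · simp
    · intro a ha b hb hab
      rw [Sym2.eq_iff] at hab
      simp only [Finset.coe_erase, Set.mem_diff, Set.mem_singleton_iff] at ha
      rcases hab with ⟨_, h⟩ | ⟨h1, h2⟩
      · exact h
      · exact h2.trans h1
  have hsub : S ⊆ (w.edges.filter (fun e => decide (x ∈ e))).toFinset := by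
    intro e he
    rw [hS, Finset.mem_image] at he
    obtain ⟨y, hy, rfl⟩ := he
    have hyx : y ≠ x := Finset.ne_of_mem_erase hy
    have : s(x,y) ∈ w.edges := by
      apply hcov
      rw [mem_edgeSet, top_adj]
      exact fun h => hyx h.symm
    rw [List.mem_toFinset, List.mem_filter]
    exact ⟨this, by simp⟩
  calc n - 1 = S.card := hcard.symm
    _ ≤ (w.edges.filter (fun e => decide (x ∈ e))).toFinset.card := Finset.card_le_card hsub
    _ ≤ (w.edges.filter (fun e => decide (x ∈ e))).length := List.toFinset_card_le _
    _ = w.edges.countP (fun e => x ∈ e) := List.countP_eq_length_filter.symm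

lemma lower_bound {n : ℕ} (hn : 2 ≤ n) {u v : Fin n}
    (w : (⊤ : SimpleGraph (Fin n)).Walk u v)
    (hcov : ∀ e ∈ (⊤ : SimpleGraph (Fin n)).edgeSet, e ∈ w.edges) :
    (if Odd n then (n ^ 2 - n) / 2 else (n ^ 2 - 2) / 2) ≤ w.length := by
  classical
  have hsum : ∑ x : Fin n, w.edges.countP (fun e => x ∈ e) = 2 * w.length := by
    rw [sum_count w.edges (fun e he =>
      (⊤ : SimpleGraph (Fin n)).not_isDiag_of_mem_edgeSet (w.edges_subset_edgeSet he)),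
      Walk.length_edges]
  have hge := fun x => count_ge w hcov x
  obtain ⟨m, rfl⟩ : ∃ m, n = m + 1 := ⟨n - 1, by omega⟩
  have hA : (m+1) ^ 2 = m*m + 2*m + 1 := by ring
  have hB : (m+1) * m = m*m + m := by ring
  have hMm : m * m % 2 = m % 2 := by
    rw [Nat.mul_mod]
    rcases Nat.mod_two_eq_zero_or_one m with h | h <;> simp [h]
  by_cases hodd : Odd (m+1)
  · rw [if_pos hodd]
    have h1 : (m+1) * m ≤ 2 * w.length := by
      calc (m+1) * m = ∑ _x : Fin (m+1), (m + 1 - 1) := by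
            simp [Finset.sum_const, Finset.card_univ, mul_comm]
        _ ≤ ∑ x : Fin (m+1), w.edges.countP (fun e => x ∈ e) :=
            Finset.sum_le_sum (fun x _ => hge x)
        _ = 2 * w.length := hsum
    have hm2 : Odd (m+1) := hodd
    rw [Nat.odd_iff] at hm2
    omega
  · rw [if_neg hodd]
    have hne : (m+1) % 2 = 0 := by
      rw [Nat.odd_iff] at hodd; omega
    have hkey : ∀ x : Fin (m+1), m + 1 ≤ w.edges.countP (fun e => x ∈ e)
        + (if x = u then 1 else 0) + (if x = v then 1 else 0) := by
      intro x
      have hc := hge x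
      by_cases h1 : x = u
      · by_cases h2 : x = v
        · rw [if_pos h1, if_pos h2]; omega
        · rw [if_pos h1, if_neg h2]; omega
      · by_cases h2 : x = v
        · rw [if_neg h1, if_pos h2]; omega
        · rw [if_neg h1, if_neg h2]
          have hp := parity_count w x
          rw [if_neg h1, if_neg h2] at hp
          omega
    have h1 : (m+1) * (m+1) ≤ 2 * w.length + 2 := by
      calc (m+1) * (m+1) = ∑ _x : Fin (m+1), (m+1) := by
            simp [Finset.sum_const, Finset.card_univ, mul_comm]
        _ ≤ ∑ x : Fin (m+1), (w.edges.countP (fun e => x ∈ e)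
            + (if x = u then 1 else 0) + (if x = v then 1 else 0)) :=
          Finset.sum_le_sum (fun x _ => hkey x)
        _ = 2 * w.length + 1 + 1 := by
          rw [Finset.sum_add_distrib, Finset.sum_add_distrib, hsum]
          simp
        _ = 2 * w.length + 2 := by ring
    have h2 : (m+1) * (m+1) = m*m + 2*m + 1 := by ring
    omega

theorem stmt1 (n : ℕ) (hn : 2 ≤ n) :
    IsLeast {k : ℕ | ∃ (u v : Fin n) (w : (⊤ : SimpleGraph (Fin n)).Walk u v),
        (∀ e ∈ (⊤ : SimpleGraph (Fin n)).edgeSet, e ∈ w.edges) ∧ w.length = k}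
      (if Odd n then (n ^ 2 - n) / 2 else (n ^ 2 - 2) / 2) := by
  constructor
  · rcases Nat.even_or_odd n with he | ho
    · obtain ⟨k, rfl⟩ : ∃ k, n = 2*k+2 := by
        rcases he with ⟨m, hm⟩; exact ⟨m-1, by omega⟩
      rw [if_neg (by rw [Nat.odd_iff]; omega)]
      obtain ⟨a, b, w, hcov, hlen⟩ := even_walk k
      exact ⟨a, b, w, hcov, hlen⟩
    · obtain ⟨k, rfl⟩ : ∃ k, n = 2*k+3 := by
        rw [Nat.odd_iff] at ho; exact ⟨(n-3)/2, by omega⟩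
      rw [if_pos ⟨k+1, by ring⟩]
      obtain ⟨w, hcov, hlen⟩ := odd_walk k
      exact ⟨0, 0, w, hcov, hlen⟩
  · rintro L ⟨u, v, w, hcov, rfl⟩
    exact lower_bound hn w hcov
end

section
/- For each n ∈ ℕ with n ≥ 1, there exists a k-sweep on the complete graph K_n, where k = (n²−n+2)/2 if n is odd and k = n²/2 if n is even. -/
open SimpleGraph

namespace Stmt2Helper

def kk (n : ℕ) : ℕ := if Odd n then (n ^ 2 - n + 2) / 2 else n ^ 2 / 2

def Cov (l : List ℕ) (u v : ℕ) : Prop := [u, v] <:+: l ∨ [v, u] <:+: l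

def Good (n : ℕ) (l : List ℕ) : Prop :=
  l.length = kk n ∧ (∀ m ∈ l, m < n) ∧ (∀ m, m < n → m ∈ l) ∧
    l.Chain' (· ≠ ·) ∧ ∀ u v, u < n → v < n → u ≠ v → Cov l u v

def Lcore (f g : ℕ → ℕ) : ℕ → List ℕ
  | 0 => [f 0]
  | m + 1 => Lcore f g m ++ [g m, f (m + 1)]

lemma Lcore_length (f g : ℕ → ℕ) (m : ℕ) : (Lcore f g m).length = 2 * m + 1 := by
  induction m with
  | zero => rfl
  | succ m ih => simp [Lcore, ih]; omega

lemma Lcore_prefix (f g : ℕ → ℕ) {i m : ℕ} (h : i ≤ m) : Lcore f g i <+: Lcore f g m := by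
  induction m with
  | zero => simp_all
  | succ m ih =>
    rcases Nat.lt_or_ge i (m+1) with h' | h'
    · exact (ih (by omega)).trans (List.prefix_append _ _)
    · have : i = m + 1 := by omega
      subst this; rfl

lemma Lcore_concat (f g : ℕ → ℕ) (m : ℕ) : ∃ p, Lcore f g m = p ++ [f m] := by
  cases m with
  | zero => exact ⟨[], rfl⟩
  | succ m => exact ⟨Lcore f g m ++ [g m], by simp [Lcore]⟩

lemma Lcore_head (f g : ℕ → ℕ) (m : ℕ) : ∃ t, Lcore f g m = f 0 :: t := by
  obtain ⟨t, ht⟩ := Lcore_prefix f g (Nat.zero_le m)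
  exact ⟨t, by simpa [Lcore] using ht.symm⟩

lemma Lcore_mem (f g : ℕ → ℕ) (m : ℕ) :
    ∀ y ∈ Lcore f g m, (∃ i, i ≤ m ∧ y = f i) ∨ ∃ i, i < m ∧ y = g i := by
  induction m with
  | zero => intro y hy; simp [Lcore] at hy; exact Or.inl ⟨0, by omega, hy⟩
  | succ m ih =>
    intro y hy
    simp only [Lcore, List.mem_append, List.mem_cons, List.mem_singleton] at hy
    rcases hy with hy | hy | hy | hy
    · rcases ih y hy with ⟨i, hi, hv⟩ | ⟨i, hi, hv⟩
      · exact Or.inl ⟨i, by omega, hv⟩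
      · exact Or.inr ⟨i, by omega, hv⟩
    · exact Or.inr ⟨m, by omega, hy⟩
    · exact Or.inl ⟨m+1, le_rfl, hy⟩
    · simp at hy

lemma Lcore_getLast? (f g : ℕ → ℕ) (m : ℕ) : (Lcore f g m).getLast? = some (f m) := by
  obtain ⟨p, hp⟩ := Lcore_concat f g m
  rw [hp, List.getLast?_concat]

lemma Lcore_chain' (f g : ℕ → ℕ) (m : ℕ) (h1 : ∀ i, f i ≠ g i) (h2 : ∀ i, g i ≠ f (i + 1)) :
    (Lcore f g m).Chain' (· ≠ ·) := by
  induction m with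
  | zero => simp [Lcore, List.Chain']
  | succ m ih =>
    rw [Lcore, List.Chain', List.isChain_append]
    refine ⟨ih, by simp [h2 m], ?_⟩
    intro a ha b hb
    rw [Lcore_getLast? f g m] at ha
    simp at ha hb
    subst ha; subst hb
    exact h1 m

lemma Lcore_triple (f g : ℕ → ℕ) {i m : ℕ} (h : i < m) :
    [f i, g i, f (i + 1)] <:+: Lcore f g m := by
  obtain ⟨p, hp⟩ := Lcore_concat f g i
  have h1 : [f i, g i, f (i+1)] <:+ Lcore f g (i+1) := ⟨p, by simp [Lcore, hp]⟩
  exact h1.isInfix.trans (Lcore_prefix f g h).isInfix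

lemma pair_index {l : List ℕ} {u v : ℕ} (h : [u, v] <:+: l) :
    ∃ i, ∃ hi : i + 1 < l.length,
      l.get ⟨i, Nat.lt_of_succ_lt hi⟩ = u ∧ l.get ⟨i + 1, hi⟩ = v := by
  obtain ⟨s, t, hst⟩ := h
  subst hst
  have hlen : (s ++ [u, v] ++ t).length = s.length + 2 + t.length := by simp; omega
  refine ⟨s.length, by omega, ?_, ?_⟩
  · rw [List.get_eq_getElem]
    simp only [List.append_assoc]
    rw [List.getElem_append_right (le_refl s.length)]
    simp
  · rw [List.get_eq_getElem]
    simp only [List.append_assoc]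
    rw [List.getElem_append_right (by omega : s.length ≤ s.length + 1)]
    simp

lemma kk_step (n : ℕ) (hn : 1 ≤ n) :
    kk (n + 2) = kk n + (if n % 2 = 1 then 2 * n + 1 else 2 * n + 2) := by
  unfold kk
  rcases Nat.even_or_odd n with he | ho
  · have h2 : n % 2 = 0 := Nat.even_iff.mp he
    rw [if_neg (by simp [Nat.odd_iff]; omega), if_neg (by simp [Nat.odd_iff]; omega),
      if_neg (by omega)]
    obtain ⟨k, hk⟩ := he
    subst hk
    have e1 : (k + k + 2) ^ 2 = 4 * (k * k) + 8 * k + 4 := by ring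
    have e2 : (k + k) ^ 2 = 4 * (k * k) := by ring
    rw [e1, e2]
    generalize k * k = K
    omega
  · have h2 : n % 2 = 1 := Nat.odd_iff.mp ho
    rw [if_pos (by simp [Nat.odd_iff]; omega), if_pos (by simp [Nat.odd_iff]; omega),
      if_pos h2]
    obtain ⟨k, hk⟩ := ho
    subst hk
    have e1 : (2 * k + 1 + 2) ^ 2 = 4 * (k * k) + 12 * k + 9 := by ring
    have e2 : (2 * k + 1) ^ 2 = 4 * (k * k) + 4 * k + 1 := by ring
    rw [e1, e2]
    generalize k * k = K
    omega


lemma step (n : ℕ) (hn : 1 ≤ n) {l : List ℕ} (hl : Good n l) :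
    ∃ l', Good (n + 2) l' := by
  obtain ⟨hlen, hbd, hall, hch, hcov⟩ := hl
  have hne : l ≠ [] := List.ne_nil_of_mem (hall 0 hn)
  set x := l.getLast hne with hxdef
  have hxn : x < n := hbd x (List.getLast_mem hne)
  set f : ℕ → ℕ := fun i => (x + i) % n with hfdef
  set g : ℕ → ℕ := fun i => if i % 2 = 0 then n else n + 1 with hgdef
  have hf0 : f 0 = x := by simp [hfdef]; exact Nat.mod_eq_of_lt hxn
  have hfn : ∀ i, f i < n := fun i => Nat.mod_lt _ (by omega)
  have hgval : ∀ i, g i = n ∨ g i = n + 1 := by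
    intro i; by_cases h : i % 2 = 0 <;> simp [hgdef, h]
  set core := Lcore f g (n - 1) with hcoredef
  set tl : List ℕ := if n % 2 = 1 then [n, n + 1, x] else [n + 1, x, n + 1, n] with htldef
  set w := l.dropLast ++ (core ++ tl) with hwdef
  obtain ⟨t0, ht0⟩ := Lcore_head f g (n - 1)
  rw [← hcoredef, hf0] at ht0
  have hlw : w = l ++ (t0 ++ tl) := by
    conv_lhs => rw [hwdef, ht0]
    conv_rhs => rw [← List.dropLast_append_getLast hne, ← hxdef]
    simp
  have hk1 : 1 ≤ kk n := hlen ▸ List.length_pos_iff.mpr hne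
  have hcl : core.length = 2 * (n - 1) + 1 := Lcore_length f g (n - 1)
  have htl_len : tl.length = if n % 2 = 1 then 3 else 4 := by
    by_cases h : n % 2 = 1 <;> simp [htldef, h]
  have hwlen : w.length = kk (n + 2) := by
    rw [kk_step n hn, hwdef]
    simp only [List.length_append, List.length_dropLast, hcl, hlen]
    by_cases h : n % 2 = 1 <;> simp [h] at htl_len ⊢ <;> rw [htl_len] <;> omega
  have hmem : ∀ m ∈ w, m < n + 2 := by
    intro m hm
    rw [hwdef] at hm
    simp only [List.mem_append] at hm
    rcases hm with hm | hm | hm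
    · have := hbd m ((List.dropLast_sublist l).subset hm); omega
    · rcases Lcore_mem f g (n - 1) m hm with ⟨i, _, rfl⟩ | ⟨i, _, rfl⟩
      · have := hfn i; omega
      · rcases hgval i with h | h <;> omega
    · by_cases h : n % 2 = 1 <;> simp [htldef, h] at hm <;> omega
  have hallw : ∀ m, m < n + 2 → m ∈ w := by
    intro m hm
    rcases Nat.lt_or_ge m n with h | h
    · rw [hlw]; exact List.mem_append_left _ (hall m h)
    · have hmtl : m ∈ tl := by
        by_cases h2 : n % 2 = 1 <;> simp [htldef, h2] <;> omega
      rw [hwdef]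
      exact List.mem_append_right _ (List.mem_append_right _ hmtl)
  -- Chain'
  have hchl := List.isChain_append.mp
    (show (l.dropLast ++ [x]).Chain' (· ≠ ·) by
      rw [hxdef, List.dropLast_append_getLast hne]; exact hch)
  have hchw : w.Chain' (· ≠ ·) := by
    rw [hwdef, List.Chain', List.isChain_append]
    refine ⟨hchl.1, ?_, ?_⟩
    · rw [List.isChain_append]
      refine ⟨Lcore_chain' f g _ (fun i => by have := hfn i; rcases hgval i with h | h <;> omega)
        (fun i => by have := hfn (i + 1); rcases hgval i with h | h <;> omega), ?_, ?_⟩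
      · by_cases h2 : n % 2 = 1 <;>
          simp [htldef, h2, List.isChain_cons_cons] <;> omega
      · intro a ha b hb
        rw [hcoredef, Lcore_getLast?] at ha
        simp only [Option.mem_def, Option.some.injEq] at ha
        subst ha
        have hfl := hfn (n - 1)
        by_cases h2 : n % 2 = 1 <;> simp [htldef, h2] at hb <;> omega
    · intro a ha b hb
      rw [ht0] at hb
      simp only [List.cons_append, List.head?_cons, Option.mem_def, Option.some.injEq] at hb
      subst hb
      exact hchl.2.2 a ha x (by simp)
  -- infix helpers
  have hsfx : core ++ tl <:+: w := (List.suffix_append _ _).isInfix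
  have htlW : tl <:+: w := (List.suffix_append core tl).isInfix.trans hsfx
  have hlpre : l <+: w := ⟨t0 ++ tl, hlw.symm⟩
  have pairFE : ∀ i, i < n - 1 → ([f i, g i] <:+: w ∧ [g i, f (i + 1)] <:+: w) := by
    intro i hi
    have ht := (Lcore_triple f g hi).trans ((List.prefix_append core tl).isInfix.trans hsfx)
    exact ⟨(show [f i, g i] <+: [f i, g i, f (i+1)] from ⟨[f (i+1)], rfl⟩).isInfix.trans ht,
      (show [g i, f (i+1)] <:+ [f i, g i, f (i+1)] from ⟨[f i], rfl⟩).isInfix.trans ht⟩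
  have FA : [x, n] <:+: w := by
    rcases Nat.lt_or_ge 1 n with h | h
    · have h0 : g 0 = n := by simp [hgdef]
      have := (pairFE 0 (by omega)).1
      rwa [hf0, h0] at this
    · have h1 : n = 1 := by omega
      have hco : core = [x] := by
        rw [hcoredef, h1]; show Lcore f g 0 = [x]; rw [show Lcore f g 0 = [f 0] from rfl, hf0]
      have htl1 : tl = [n, n + 1, x] := by rw [htldef, if_pos (by omega)]
      have : [x, n] <+: core ++ tl := by rw [hco, htl1]; exact ⟨[n + 1, x], rfl⟩
      exact this.isInfix.trans hsfx
  have FB : [n + 1, x] <:+: w := by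
    by_cases h2 : n % 2 = 1
    · exact ((show [n+1, x] <:+ [n, n+1, x] from ⟨[n], rfl⟩).isInfix.trans
        (by rw [htldef, if_pos h2] at htlW; exact htlW))
    · exact ((show [n+1, x] <+: [n+1, x, n+1, n] from ⟨[n+1, n], rfl⟩).isInfix.trans
        (by rw [htldef, if_neg h2] at htlW; exact htlW))
  have FC : Cov w n (n + 1) := by
    by_cases h2 : n % 2 = 1
    · exact Or.inl ((show [n, n+1] <+: [n, n+1, x] from ⟨[x], rfl⟩).isInfix.trans
        (by rw [htldef, if_pos h2] at htlW; exact htlW))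
    · exact Or.inr ((show [n+1, n] <:+ [n+1, x, n+1, n] from ⟨[n+1, x], rfl⟩).isInfix.trans
        (by rw [htldef, if_neg h2] at htlW; exact htlW))
  have FD : ([f (n - 1)] ++ tl) <:+: w := by
    obtain ⟨p, hp⟩ := Lcore_concat f g (n - 1)
    have : [f (n - 1)] ++ tl <:+ core ++ tl := ⟨p, by rw [hcoredef, hp]; simp⟩
    exact this.isInfix.trans hsfx
  have hfind : ∀ z, z < n → ∃ j, j < n ∧ f j = z := by
    intro z hz
    refine ⟨(n + z - x) % n, Nat.mod_lt _ (by omega), ?_⟩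
    show (x + (n + z - x) % n) % n = z
    have e : (x + (n + z - x) % n) % n = (x + (n + z - x)) % n := by
      conv_rhs => rw [Nat.add_mod]
      conv_lhs => rw [Nat.add_mod, Nat.mod_mod_of_dvd _ (dvd_refl n)]
    rw [e, show x + (n + z - x) = z + n by omega, Nat.add_mod_right, Nat.mod_eq_of_lt hz]
  have claimN : ∀ z, z < n → Cov w n z := by
    intro z hz
    obtain ⟨j, hj, hfj⟩ := hfind z hz
    rcases eq_or_ne j 0 with rfl | hj0
    · rw [hf0] at hfj
      exact Or.inr (hfj ▸ FA)
    · rcases eq_or_ne j (n - 1) with rfl | hjn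
      · by_cases hpar : n % 2 = 1
        · have h1 : [f (n-1), n] <+: [f (n-1)] ++ tl := by
            rw [htldef, if_pos hpar]; exact ⟨[n+1, x], rfl⟩
          exact Or.inr (hfj ▸ h1.isInfix.trans FD)
        · have hgv : g (n - 2) = n := by rw [hgdef]; simp only; rw [if_pos (by omega)]
          have := (pairFE (n - 2) (by omega)).2
          rw [show n - 2 + 1 = n - 1 by omega, hgv, hfj] at this
          exact Or.inl this
      · by_cases hpar : j % 2 = 0
        · have := (pairFE j (by omega)).1
          rw [hfj, show g j = n by rw [hgdef]; simp only; rw [if_pos hpar]] at this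
          exact Or.inr this
        · have := (pairFE (j - 1) (by omega)).2
          rw [show j - 1 + 1 = j by omega, hfj,
            show g (j - 1) = n by rw [hgdef]; simp only; rw [if_pos (by omega)]] at this
          exact Or.inl this
  have claimN1 : ∀ z, z < n → Cov w (n + 1) z := by
    intro z hz
    obtain ⟨j, hj, hfj⟩ := hfind z hz
    rcases eq_or_ne j 0 with rfl | hj0
    · rw [hf0] at hfj
      exact Or.inl (hfj ▸ FB)
    · rcases eq_or_ne j (n - 1) with rfl | hjn
      · by_cases hpar : n % 2 = 1
        · have hgv : g (n - 2) = n + 1 := by rw [hgdef]; simp only; rw [if_neg (by omega)]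
          have := (pairFE (n - 2) (by omega)).2
          rw [show n - 2 + 1 = n - 1 by omega, hgv, hfj] at this
          exact Or.inl this
        · have h1 : [f (n-1), n+1] <+: [f (n-1)] ++ tl := by
            rw [htldef, if_neg hpar]; exact ⟨[x, n+1, n], rfl⟩
          exact Or.inr (hfj ▸ h1.isInfix.trans FD)
      · by_cases hpar : j % 2 = 0
        · have := (pairFE (j - 1) (by omega)).2
          rw [show j - 1 + 1 = j by omega, hfj,
            show g (j - 1) = n + 1 by rw [hgdef]; simp only; rw [if_neg (by omega)]] at this
          exact Or.inl this
        · have := (pairFE j (by omega)).1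
          rw [hfj, show g j = n + 1 by rw [hgdef]; simp only; rw [if_neg hpar]] at this
          exact Or.inr this
  have covSymm : ∀ u v, Cov w u v → Cov w v u := fun u v h => Or.symm h
  refine ⟨w, hwlen, hmem, hallw, hchw, ?_⟩
  intro u v hu hv huv
  rcases Nat.lt_or_ge u n with hun | hun <;> rcases Nat.lt_or_ge v n with hvn | hvn
  · rcases hcov u v hun hvn huv with h | h
    · exact Or.inl (h.trans hlpre.isInfix)
    · exact Or.inr (h.trans hlpre.isInfix)
  · rcases (show v = n ∨ v = n + 1 by omega) with rfl | rfl
    · exact covSymm _ _ (claimN u hun)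
    · exact covSymm _ _ (claimN1 u hun)
  · rcases (show u = n ∨ u = n + 1 by omega) with rfl | rfl
    · exact claimN v hvn
    · exact claimN1 v hvn
  · rcases (show u = n ∧ v = n + 1 ∨ u = n + 1 ∧ v = n by omega) with ⟨rfl, rfl⟩ | ⟨rfl, rfl⟩
    · exact FC
    · exact covSymm _ _ FC

lemma good_one : Good 1 [0] := by
  refine ⟨by decide, by decide, by decide, by simp [List.Chain'], ?_⟩
  intro u v hu hv huv; omega

lemma good_two : Good 2 [0, 1] := by
  refine ⟨by decide, by decide, by decide, by simp [List.Chain'], ?_⟩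
  intro u v hu hv huv
  interval_cases u <;> interval_cases v <;> simp_all [Cov] <;> decide

lemma main : ∀ n, 1 ≤ n → ∃ l, Good n l := by
  intro n
  induction n using Nat.strong_induction_on with
  | _ n ih =>
    rcases n with _ | _ | _ | m
    · omega
    · exact fun _ => ⟨[0], good_one⟩
    · exact fun _ => ⟨[0, 1], good_two⟩
    · intro _
      obtain ⟨l, hl⟩ := ih (m + 1) (by omega) (by omega)
      exact step (m + 1) (by omega) hl

lemma conv {n : ℕ} {l : List ℕ} (hbd : ∀ m ∈ l, m < n) (hall : ∀ m, m < n → m ∈ l)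
    (hch : l.Chain' (· ≠ ·)) (hcov : ∀ u v, u < n → v < n → u ≠ v → Cov l u v) :
    ∃ f : Fin l.length → Fin n,
      (Function.Surjective f ∧
        ∀ i : ℕ, ∀ hi : i + 1 < l.length,
          (⊤ : SimpleGraph (Fin n)).Adj (f ⟨i, Nat.lt_of_succ_lt hi⟩) (f ⟨i + 1, hi⟩)) ∧
      ∀ e ∈ (⊤ : SimpleGraph (Fin n)).edgeSet, ∃ i : ℕ, ∃ hi : i + 1 < l.length,
        e = s(f ⟨i, Nat.lt_of_succ_lt hi⟩, f ⟨i + 1, hi⟩) := by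
  refine ⟨fun i => ⟨l.get i, hbd _ (l.get_mem _)⟩, ⟨?_, ?_⟩, ?_⟩
  · intro y
    obtain ⟨idx, hidx⟩ := List.mem_iff_get.mp (hall y.val y.isLt)
    exact ⟨idx, Fin.ext hidx⟩
  · intro i hi
    rw [SimpleGraph.top_adj]
    intro hEq
    exact List.isChain_iff_getElem.mp hch i (by omega) (congrArg Fin.val hEq)
  · intro e he
    induction e with
    | _ a b =>
      rw [SimpleGraph.mem_edgeSet, SimpleGraph.top_adj] at he
      rcases hcov a.val b.val a.isLt b.isLt (fun h => he (Fin.ext h)) with h | h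
      · obtain ⟨i, hi, h1, h2⟩ := pair_index h
        refine ⟨i, hi, ?_⟩
        rw [Sym2.eq_iff]
        exact Or.inl ⟨Fin.ext h1.symm, Fin.ext h2.symm⟩
      · obtain ⟨i, hi, h1, h2⟩ := pair_index h
        refine ⟨i, hi, ?_⟩
        rw [Sym2.eq_iff]
        exact Or.inr ⟨Fin.ext h2.symm, Fin.ext h1.symm⟩

end Stmt2Helper

theorem stmt2 (n : ℕ) (hn : 1 ≤ n) :
    ∃ f : Fin (if Odd n then (n ^ 2 - n + 2) / 2 else n ^ 2 / 2) → Fin n,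
      IsSweep (⊤ : SimpleGraph (Fin n)) f := by
  obtain ⟨l, hlen, hbd, hall, hch, hcov⟩ := Stmt2Helper.main n hn
  obtain ⟨f, hf⟩ := Stmt2Helper.conv hbd hall hch hcov
  rw [show (if Odd n then (n ^ 2 - n + 2) / 2 else n ^ 2 / 2) = l.length by rw [hlen]; rfl]
  exact ⟨f, hf⟩
end

section
/- If G is a tree (a finite connected acyclic simple graph), then σ⊠_V(G)=σ⊠_E(G), σ×_V(G)=σ×_E(G), and σ□_V(G)=σ□_E(G). -/
open SimpleGraph

lemma lazy_sweepCond {V : Type*} {G : SimpleGraph V} (hG : G.IsAcyclic) {l : ℕ}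
    {f : Fin l → V}
    (hsurj : Function.Surjective f)
    (hstep : ∀ i : ℕ, ∀ hi : i + 1 < l,
      G.Adj (f ⟨i, Nat.lt_of_succ_lt hi⟩) (f ⟨i + 1, hi⟩) ∨
        f ⟨i, Nat.lt_of_succ_lt hi⟩ = f ⟨i + 1, hi⟩) :
    ∀ e ∈ G.edgeSet, ∃ i : ℕ, ∃ hi : i + 1 < l,
      e = s(f ⟨i, Nat.lt_of_succ_lt hi⟩, f ⟨i + 1, hi⟩) := by
  intro e he
  induction e with
  | _ u v =>
  rw [G.mem_edgeSet] at he
  by_contra hcon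
  push_neg at hcon
  set G' : SimpleGraph V := SimpleGraph.fromEdgeSet
    {e' | e' ∈ G.edgeSet ∧ ∃ i : ℕ, ∃ hi : i + 1 < l,
      e' = s(f ⟨i, Nat.lt_of_succ_lt hi⟩, f ⟨i + 1, hi⟩)} with hG'
  have hle : G' ≤ G \ SimpleGraph.fromEdgeSet {s(u, v)} := by
    intro a b hab
    rw [hG', fromEdgeSet_adj] at hab
    obtain ⟨⟨hmem, i, hi, heq⟩, hne⟩ := hab
    refine ⟨G.mem_edgeSet.mp hmem, ?_⟩
    rw [fromEdgeSet_adj]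
    rintro ⟨h1, -⟩
    simp only [Set.mem_singleton_iff] at h1
    exact hcon i hi (h1 ▸ heq)
  have hstep' : ∀ n : ℕ, ∀ hn : n + 1 < l,
      G'.Reachable (f ⟨n, Nat.lt_of_succ_lt hn⟩) (f ⟨n + 1, hn⟩) := by
    intro n hn
    rcases hstep n hn with h | h
    · exact SimpleGraph.Adj.reachable (by
        rw [hG', fromEdgeSet_adj]
        exact ⟨⟨G.mem_edgeSet.mpr h, n, hn, rfl⟩, h.ne⟩)
    · rw [h]
  have hchain : ∀ n : ℕ, ∀ a : ℕ, ∀ h : a + n < l,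
      G'.Reachable (f ⟨a, by omega⟩) (f ⟨a + n, h⟩) := by
    intro n
    induction n with
    | zero => intro a h; exact SimpleGraph.Reachable.refl _
    | succ n ih =>
      intro a h
      exact (ih a (by omega)).trans (hstep' (a + n) (by omega))
  have hreach : ∀ i j : Fin l, G'.Reachable (f i) (f j) := by
    intro i j
    have key : ∀ i j : Fin l, (i : ℕ) ≤ (j : ℕ) → G'.Reachable (f i) (f j) := by
      intro i j h
      have := hchain ((j : ℕ) - (i : ℕ)) (i : ℕ) (by omega)
      have e1 : (⟨(i : ℕ), by omega⟩ : Fin l) = i := Fin.ext rfl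
      have e2 : (⟨(i : ℕ) + ((j : ℕ) - (i : ℕ)), by omega⟩ : Fin l) = j := Fin.ext (by simp; omega)
      rwa [e1, e2] at this
    rcases le_total (i : ℕ) (j : ℕ) with h | h
    · exact key i j h
    · exact (key j i h).symm
  obtain ⟨a, ha⟩ := hsurj u
  obtain ⟨b, hb⟩ := hsurj v
  have hbridge := (SimpleGraph.isAcyclic_iff_forall_adj_isBridge.mp hG) he
  rw [SimpleGraph.isBridge_iff] at hbridge
  exact hbridge ((ha ▸ hb ▸ hreach a b).mono hle)

lemma track_sweepCond {V : Type*} {G : SimpleGraph V} (hG : G.IsAcyclic) {l : ℕ}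
    {f : Fin l → V} (hf : IsTrack G f) : SweepCond G f :=
  lazy_sweepCond hG hf.1 (fun i hi => Or.inl (hf.2 i hi))

theorem stmt4 {V : Type*} [Fintype V] (G : SimpleGraph V) (hG : G.IsTree) :
    strongVertexSpan G = strongEdgeSpan G ∧
      directVertexSpan G = directEdgeSpan G ∧
        cartesianVertexSpan G = cartesianEdgeSpan G := by
  have hac := hG.IsAcyclic
  refine ⟨?_, ?_, ?_⟩
  · unfold strongVertexSpan strongEdgeSpan
    congr 1
    ext d
    constructor
    · rintro ⟨l, f, g, hf, hg, hd⟩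
      exact ⟨l, f, g, ⟨hf, lazy_sweepCond hac hf.1 hf.2⟩,
        ⟨hg, lazy_sweepCond hac hg.1 hg.2⟩, hd⟩
    · rintro ⟨l, f, g, hf, hg, hd⟩
      exact ⟨l, f, g, hf.1, hg.1, hd⟩
  · unfold directVertexSpan directEdgeSpan
    congr 1
    ext d
    constructor
    · rintro ⟨l, f, g, hf, hg, hd⟩
      exact ⟨l, f, g, ⟨hf, track_sweepCond hac hf⟩, ⟨hg, track_sweepCond hac hg⟩, hd⟩
    · rintro ⟨l, f, g, hf, hg, hd⟩
      exact ⟨l, f, g, hf.1, hg.1, hd⟩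
  · unfold cartesianVertexSpan cartesianEdgeSpan
    congr 1
    ext d
    constructor
    · rintro ⟨l, f, g, hf, hg, ho, hd⟩
      exact ⟨l, f, g, ⟨hf, lazy_sweepCond hac hf.1 hf.2⟩,
        ⟨hg, lazy_sweepCond hac hg.1 hg.2⟩, ho, hd⟩
    · rintro ⟨l, f, g, hf, hg, ho, hd⟩
      exact ⟨l, f, g, hf.1, hg.1, ho, hd⟩
end

section
/- For every n ≥ 3, the cycle C_n satisfies σ⊠_V(C_n)=σ⊠_E(C_n), σ×_V(C_n)=σ×_E(C_n), and σ□_V(C_n)=σ□_E(C_n). -/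
open SimpleGraph

namespace SpanCycleAux

open SimpleGraph
open Fin.NatCast Fin.CommRing

variable {m : ℕ}

private lemma cg_adj {u v : Fin (m+3)} :
    (cycleGraph (m+3)).Adj u v ↔ u - v = 1 ∨ v - u = 1 :=
  cycleGraph_adj

private lemma adj_succ (x : Fin (m+3)) : (cycleGraph (m+3)).Adj x (x+1) :=
  cg_adj.mpr (Or.inr (by ring))

private lemma adj_eps {ε : Fin (m+3)} (hε : ε = 1 ∨ ε = -1) (x : Fin (m+3)) :
    (cycleGraph (m+3)).Adj x (x+ε) := by
  rcases hε with rfl | rfl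
  · exact adj_succ x
  · exact cg_adj.mpr (Or.inl (by ring))

private def wk : (k : ℕ) → (cycleGraph (m+3)).Walk 0 ((k : ℕ) : Fin (m+3))
  | 0 => Walk.nil.copy rfl (by simp)
  | k+1 => ((wk k).concat (adj_succ _)).copy rfl (Nat.cast_add_one k).symm

private lemma wk_length (k : ℕ) : (wk (m := m) k).length = k := by
  induction k with
  | zero => simp [wk]
  | succ k ih => simp [wk, Walk.length_copy, Walk.length_concat, ih]

private lemma reach0 (x : Fin (m+3)) : (cycleGraph (m+3)).Reachable 0 x :=
  ⟨(wk x.val).copy rfl (Fin.cast_val_eq_self x)⟩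

private lemma cg_conn : (cycleGraph (m+3)).Connected := by
  rw [connected_iff]
  exact ⟨fun u v => (reach0 u).symm.trans (reach0 v), ⟨0⟩⟩

private def rot (t : Fin (m+3)) : cycleGraph (m+3) →g cycleGraph (m+3) where
  toFun := (· + t)
  map_rel' := fun {u v} h => by
    rw [cg_adj] at h ⊢
    simpa using h

private lemma dist_add_le (u v t : Fin (m+3)) :
    (cycleGraph (m+3)).dist (u+t) (v+t) ≤ (cycleGraph (m+3)).dist u v := by
  obtain ⟨p, hp⟩ := (cg_conn (m := m)).exists_walk_length_eq_dist u v
  calc (cycleGraph (m+3)).dist (u+t) (v+t) ≤ (p.map (rot t)).length := dist_le _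
    _ = p.length := by simp
    _ = _ := hp

private lemma dist_add (u v t : Fin (m+3)) :
    (cycleGraph (m+3)).dist (u+t) (v+t) = (cycleGraph (m+3)).dist u v := by
  refine le_antisymm (dist_add_le u v t) ?_
  have := dist_add_le (u+t) (v+t) (-t)
  simpa using this

private lemma dist_off (u v : Fin (m+3)) :
    (cycleGraph (m+3)).dist u v = (cycleGraph (m+3)).dist 0 (v - u) := by
  have := dist_add (m := m) 0 (v - u) u
  rw [zero_add, sub_add_cancel] at this
  exact this

private lemma dist_le_bound (u v : Fin (m+3)) : (cycleGraph (m+3)).dist u v ≤ m + 3 := by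
  rw [dist_off]
  calc (cycleGraph (m+3)).dist 0 (v - u)
      ≤ ((wk (v-u).val).copy rfl (Fin.cast_val_eq_self _)).length := dist_le _
    _ = (v - u).val := by rw [Walk.length_copy, wk_length]
    _ ≤ m + 3 := le_of_lt (v-u).isLt

private lemma edge_form {e : Sym2 (Fin (m+3))} (he : e ∈ (cycleGraph (m+3)).edgeSet) :
    ∃ x : Fin (m+3), e = s(x, x+1) := by
  induction e with
  | h u v =>
    rw [mem_edgeSet, cg_adj] at he
    rcases he with h | h
    · refine ⟨v, ?_⟩
      have hu : u = v + 1 := by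
        rw [sub_eq_iff_eq_add] at h; rw [h]; exact add_comm 1 v
      subst hu
      exact Sym2.eq_swap
    · refine ⟨u, ?_⟩
      have hv : v = u + 1 := by
        rw [sub_eq_iff_eq_add] at h; rw [h]; exact add_comm 1 u
      subst hv
      rfl

private lemma cover {ε : Fin (m+3)} (hε : ε = 1 ∨ ε = -1) (a x : Fin (m+3)) :
    ∃ t : ℕ, t + 1 ≤ m + 3 ∧
      s(x, x+1) = s(a + ε * ((t : ℕ) : Fin (m+3)), a + ε * (((t+1 : ℕ)) : Fin (m+3))) := by
  rcases hε with rfl | rfl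
  · refine ⟨(x - a).val, by have := (x-a).isLt; omega, ?_⟩
    have h1 : (((x-a).val : ℕ) : Fin (m+3)) = x - a := Fin.cast_val_eq_self _
    have e1 : a + 1 * (x - a) = x := by ring
    have e2 : a + 1 * ((x - a) + 1) = x + 1 := by ring
    rw [Nat.cast_add_one, h1, e1, e2]
  · refine ⟨(a - x - 1).val, by have := (a-x-1).isLt; omega, ?_⟩
    have h1 : (((a-x-1).val : ℕ) : Fin (m+3)) = a - x - 1 := Fin.cast_val_eq_self _
    have e1 : a + (-1) * (a - x - 1) = x + 1 := by ring
    have e2 : a + (-1) * ((a - x - 1) + 1) = x := by ring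
    rw [Nat.cast_add_one, h1, e1, e2]
    exact Sym2.eq_swap

variable {l : ℕ}

private def ext (m' : ℕ) (f : Fin l → Fin (m+3)) (T : ℕ → Fin (m+3)) :
    Fin (l + m') → Fin (m+3) :=
  fun j => if h : j.val < l then f ⟨j.val, h⟩ else T (j.val - (l - 1))

private lemma ext_lt {m' : ℕ} {f : Fin l → Fin (m+3)} {T : ℕ → Fin (m+3)} {j : ℕ}
    (h : j < l) (hj : j < l + m') : ext m' f T ⟨j, hj⟩ = f ⟨j, h⟩ := dif_pos h

private lemma ext_val {m' : ℕ} {f : Fin l → Fin (m+3)} {T : ℕ → Fin (m+3)}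
    (hl : 1 ≤ l) (hT0 : T 0 = f ⟨l-1, by omega⟩) {j : ℕ}
    (h1 : l - 1 ≤ j) (h2 : j < l + m') :
    ext m' f T ⟨j, h2⟩ = T (j - (l-1)) := by
  by_cases h : j < l
  · have hj : j = l - 1 := by omega
    subst hj
    rw [ext_lt h h2, Nat.sub_self, hT0]
  · exact dif_neg h

private lemma ext_surj {m' : ℕ} {f : Fin l → Fin (m+3)} {T : ℕ → Fin (m+3)}
    (hf : Function.Surjective f) : Function.Surjective (ext m' f T) := by
  intro v
  obtain ⟨i, rfl⟩ := hf v
  exact ⟨⟨i.val, lt_of_lt_of_le i.isLt (Nat.le_add_right _ _)⟩, ext_lt i.isLt _⟩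

private lemma ext_step2 {m' : ℕ} {f g : Fin l → Fin (m+3)} {S T : ℕ → Fin (m+3)}
    {Q : Fin (m+3) → Fin (m+3) → Fin (m+3) → Fin (m+3) → Prop}
    (hl : 1 ≤ l) (hS0 : S 0 = f ⟨l-1, by omega⟩) (hT0 : T 0 = g ⟨l-1, by omega⟩)
    (hfg : ∀ i (hi : i + 1 < l),
      Q (f ⟨i, Nat.lt_of_succ_lt hi⟩) (f ⟨i+1, hi⟩) (g ⟨i, Nat.lt_of_succ_lt hi⟩) (g ⟨i+1, hi⟩))
    (hST : ∀ k, k + 1 ≤ m' → Q (S k) (S (k+1)) (T k) (T (k+1)))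
    (i : ℕ) (hi : i + 1 < l + m') :
    Q (ext m' f S ⟨i, Nat.lt_of_succ_lt hi⟩) (ext m' f S ⟨i+1, hi⟩)
      (ext m' g T ⟨i, Nat.lt_of_succ_lt hi⟩) (ext m' g T ⟨i+1, hi⟩) := by
  by_cases h : i + 1 < l
  · rw [ext_lt (Nat.lt_of_succ_lt h) _, ext_lt h _, ext_lt (Nat.lt_of_succ_lt h) _,
      ext_lt h _]
    exact hfg i h
  · have h1 : l - 1 ≤ i := by omega
    rw [ext_val hl hS0 h1 _, ext_val hl hS0 (by omega) _, ext_val hl hT0 h1 _,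
      ext_val hl hT0 (by omega) _]
    have e : i + 1 - (l - 1) = (i - (l-1)) + 1 := by omega
    rw [e]
    exact hST _ (by omega)

private lemma ext_sweep {m' : ℕ} {f : Fin l → Fin (m+3)} {T : ℕ → Fin (m+3)}
    (hl : 1 ≤ l) (hT0 : T 0 = f ⟨l-1, by omega⟩)
    (hcov : ∀ e ∈ (cycleGraph (m+3)).edgeSet, ∃ k, k + 1 ≤ m' ∧ e = s(T k, T (k+1))) :
    SweepCond (cycleGraph (m+3)) (ext m' f T) := by
  intro e he
  obtain ⟨k, hk, he'⟩ := hcov e he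
  refine ⟨l - 1 + k, by omega, ?_⟩
  rw [ext_val hl hT0 (by omega) _, ext_val hl hT0 (by omega) _]
  have e1 : l - 1 + k - (l-1) = k := by omega
  have e2 : l - 1 + k + 1 - (l-1) = k + 1 := by omega
  rw [e1, e2]
  exact he'

private lemma mDist_le {f g : Fin l → Fin (m+3)} (i : Fin l) :
    mDist (cycleGraph (m+3)) f g ≤ (cycleGraph (m+3)).dist (f i) (g i) :=
  Nat.sInf_le ⟨i, rfl⟩

private lemma le_mDist (hl : 0 < l) {f g : Fin l → Fin (m+3)} {d : ℕ}
    (h : ∀ i, d ≤ (cycleGraph (m+3)).dist (f i) (g i)) :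
    d ≤ mDist (cycleGraph (m+3)) f g := by
  refine le_csInf ⟨_, ⟨⟨0, hl⟩, rfl⟩⟩ ?_
  rintro b ⟨i, rfl⟩
  exact h i

private lemma track_len {f : Fin l → Fin (m+3)} (hf : Function.Surjective f) : m + 3 ≤ l := by
  simpa using Fintype.card_le_of_surjective f hf

private lemma sweep_to_lazy {f : Fin l → Fin (m+3)}
    (h : IsSweep (cycleGraph (m+3)) f) : IsLazySweep (cycleGraph (m+3)) f :=
  ⟨⟨h.1.1, fun i hi => Or.inl (h.1.2 i hi)⟩, h.2⟩

private lemma extend_sd {f g : Fin l → Fin (m+3)}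
    {P : Fin (m+3) → Fin (m+3) → Prop}
    (hP : ∀ x y, (cycleGraph (m+3)).Adj x y → P x y)
    (hfs : Function.Surjective f) (hgs : Function.Surjective g)
    (hf : ∀ i (hi : i+1 < l), P (f ⟨i, Nat.lt_of_succ_lt hi⟩) (f ⟨i+1, hi⟩))
    (hg : ∀ i (hi : i+1 < l), P (g ⟨i, Nat.lt_of_succ_lt hi⟩) (g ⟨i+1, hi⟩)) :
    ∃ (F G' : Fin (l + (m+3)) → Fin (m+3)),
      Function.Surjective F ∧ Function.Surjective G' ∧
      (∀ i (hi : i+1 < l + (m+3)),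
        P (F ⟨i, Nat.lt_of_succ_lt hi⟩) (F ⟨i+1, hi⟩)) ∧
      (∀ i (hi : i+1 < l + (m+3)),
        P (G' ⟨i, Nat.lt_of_succ_lt hi⟩) (G' ⟨i+1, hi⟩)) ∧
      SweepCond (cycleGraph (m+3)) F ∧ SweepCond (cycleGraph (m+3)) G' ∧
      mDist (cycleGraph (m+3)) f g ≤ mDist (cycleGraph (m+3)) F G' := by
  have hl : 1 ≤ l := le_trans (by omega) (track_len hfs)
  set a := f ⟨l-1, by omega⟩ with ha
  set b := g ⟨l-1, by omega⟩ with hb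
  set S : ℕ → Fin (m+3) := fun k => a + ((k : ℕ) : Fin (m+3)) with hS
  set T : ℕ → Fin (m+3) := fun k => b + ((k : ℕ) : Fin (m+3)) with hT
  have hS0 : S 0 = a := by simp [hS]
  have hT0 : T 0 = b := by simp [hT]
  have hmove : ∀ (x : Fin (m+3)) (k : ℕ),
      (x + ((k : ℕ) : Fin (m+3))) + 1 = x + (((k+1 : ℕ)) : Fin (m+3)) := by
    intro x k; push_cast; ring
  have hSstep : ∀ k, (cycleGraph (m+3)).Adj (S k) (S (k+1)) := fun k => by
    rw [hS]; dsimp only; rw [← hmove a k]; exact adj_succ _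
  have hTstep : ∀ k, (cycleGraph (m+3)).Adj (T k) (T (k+1)) := fun k => by
    rw [hT]; dsimp only; rw [← hmove b k]; exact adj_succ _
  have steps := fun i hi => ext_step2 (m' := m+3)
    (Q := fun x1 x2 y1 y2 => P x1 x2 ∧ P y1 y2) hl hS0 hT0
    (fun i hi => ⟨hf i hi, hg i hi⟩)
    (fun k _ => ⟨hP _ _ (hSstep k), hP _ _ (hTstep k)⟩) i hi
  have hcovS : ∀ e ∈ (cycleGraph (m+3)).edgeSet, ∃ k, k + 1 ≤ m+3 ∧ e = s(S k, S (k+1)) := by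
    intro e he
    obtain ⟨x, rfl⟩ := edge_form he
    obtain ⟨t, ht, hte⟩ := cover (Or.inl rfl) a x
    refine ⟨t, ht, ?_⟩
    simpa [hS, one_mul] using hte
  have hcovT : ∀ e ∈ (cycleGraph (m+3)).edgeSet, ∃ k, k + 1 ≤ m+3 ∧ e = s(T k, T (k+1)) := by
    intro e he
    obtain ⟨x, rfl⟩ := edge_form he
    obtain ⟨t, ht, hte⟩ := cover (Or.inl rfl) b x
    refine ⟨t, ht, ?_⟩
    simpa [hT, one_mul] using hte
  refine ⟨ext (m+3) f S, ext (m+3) g T, ext_surj hfs, ext_surj hgs,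
    fun i hi => (steps i hi).1, fun i hi => (steps i hi).2,
    ext_sweep hl hS0 hcovS, ext_sweep hl hT0 hcovT, ?_⟩
  refine le_mDist (by omega) fun i => ?_
  by_cases h : i.val < l
  · have hF : ext (m+3) f S i = f ⟨i.val, h⟩ := ext_lt h i.isLt
    have hG : ext (m+3) g T i = g ⟨i.val, h⟩ := ext_lt h i.isLt
    rw [hF, hG]
    exact mDist_le _
  · have hF : ext (m+3) f S i = S (i.val - (l-1)) := ext_val hl hS0 (by omega) i.isLt
    have hG : ext (m+3) g T i = T (i.val - (l-1)) := ext_val hl hT0 (by omega) i.isLt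
    rw [hF, hG, hS, hT]
    dsimp only
    rw [dist_add]
    exact mDist_le ⟨l-1, by omega⟩

set_option maxHeartbeats 1000000 in
private lemma extend_cart {f g : Fin l → Fin (m+3)}
    (hf : IsLazyTrack (cycleGraph (m+3)) f) (hg : IsLazyTrack (cycleGraph (m+3)) g)
    (hop : IsOpposite (cycleGraph (m+3)) f g) :
    ∃ (F G' : Fin (l + 2*(m+3)) → Fin (m+3)),
      IsLazySweep (cycleGraph (m+3)) F ∧ IsLazySweep (cycleGraph (m+3)) G' ∧
      IsOpposite (cycleGraph (m+3)) F G' ∧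
      mDist (cycleGraph (m+3)) f g ≤ mDist (cycleGraph (m+3)) F G' := by
  have hl3 : m + 3 ≤ l := track_len hf.1
  have hl : 1 ≤ l := by omega
  have hL : l - 1 < l := by omega
  obtain ⟨a, ha⟩ : ∃ a, f ⟨l-1, hL⟩ = a := ⟨_, rfl⟩
  obtain ⟨b, hb⟩ : ∃ b, g ⟨l-1, hL⟩ = b := ⟨_, rfl⟩
  have hdl : mDist (cycleGraph (m+3)) f g ≤ (cycleGraph (m+3)).dist 0 (b - a) := by
    have := mDist_le (m := m) (f := f) (g := g) ⟨l-1, hL⟩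
    rw [ha, hb, dist_off] at this
    exact this
  have hchoice : ∃ ε : Fin (m+3), (ε = 1 ∨ ε = -1) ∧
      mDist (cycleGraph (m+3)) f g ≤ (cycleGraph (m+3)).dist 0 ((b - a) - ε) := by
    by_cases h1 : mDist (cycleGraph (m+3)) f g ≤ (cycleGraph (m+3)).dist 0 ((b - a) - 1)
    · exact ⟨1, Or.inl rfl, h1⟩
    by_cases h2 : mDist (cycleGraph (m+3)) f g ≤ (cycleGraph (m+3)).dist 0 ((b - a) + 1)
    · exact ⟨-1, Or.inr rfl, by rw [sub_neg_eq_add]; exact h2⟩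
    exfalso
    push_neg at h1 h2
    have hi : l - 2 + 1 < l := by omega
    have hfe : (⟨l-2+1, hi⟩ : Fin l) = ⟨l-1, hL⟩ := by
      rw [Fin.mk_eq_mk]; omega
    have hstep := hop (l-2) hi
    have hfl := hf.2 (l-2) hi
    have hgl := hg.2 (l-2) hi
    obtain ⟨u, hu⟩ : ∃ u, f ⟨l-2, Nat.lt_of_succ_lt hi⟩ = u := ⟨_, rfl⟩
    obtain ⟨v, hv⟩ : ∃ v, g ⟨l-2, Nat.lt_of_succ_lt hi⟩ = v := ⟨_, rfl⟩
    simp only [hfe, ha, hb, hu, hv] at hstep hfl hgl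
    have key : v - u = (b - a) - 1 ∨ v - u = (b - a) + 1 := by
      by_cases hadj : (cycleGraph (m+3)).Adj u a
      · have hvb : v = b := hstep.mp hadj
        rcases cg_adj.mp hadj with h | h
        · left
          rw [sub_eq_iff_eq_add] at h
          rw [hvb, h]; ring
        · right
          rw [sub_eq_iff_eq_add] at h
          rw [hvb, show u = a - 1 by rw [h]; ring]; ring
      · have hvne : v ≠ b := fun hvb => hadj (hstep.mpr hvb)
        have hua : u = a := hfl.resolve_left hadj
        have hadjg : (cycleGraph (m+3)).Adj v b := hgl.resolve_right hvne
        rcases cg_adj.mp hadjg with h | h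
        · right
          rw [sub_eq_iff_eq_add] at h
          rw [hua, h]; ring
        · left
          rw [sub_eq_iff_eq_add] at h
          rw [hua, show v = b - 1 by rw [h]; ring]; ring
    have hd2 : mDist (cycleGraph (m+3)) f g ≤ (cycleGraph (m+3)).dist 0 (v - u) := by
      have := mDist_le (m := m) (f := f) (g := g) ⟨l-2, Nat.lt_of_succ_lt hi⟩
      rw [hu, hv, dist_off] at this
      exact this
    rcases key with h | h <;> rw [h] at hd2 <;> omega
  obtain ⟨ε, hε, hdce⟩ := hchoice
  have hadj := adj_eps hε
  set S : ℕ → Fin (m+3) := fun k => a + ε * ((((k+1)/2 : ℕ)) : Fin (m+3)) with hS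
  set T : ℕ → Fin (m+3) := fun k => b + ε * (((k/2 : ℕ)) : Fin (m+3)) with hT
  have hS0 : S 0 = f ⟨l-1, by omega⟩ := by rw [ha]; norm_num [hS]
  have hT0 : T 0 = g ⟨l-1, by omega⟩ := by rw [hb]; norm_num [hT]
  have hmove : ∀ (x : Fin (m+3)) (t : ℕ),
      (x + ε * ((t : ℕ) : Fin (m+3))) + ε = x + ε * (((t+1 : ℕ)) : Fin (m+3)) := by
    intro x t; push_cast; ring
  have hST : ∀ k, k + 1 ≤ 2*(m+3) →
      ((cycleGraph (m+3)).Adj (S k) (S (k+1)) ∨ S k = S (k+1)) ∧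
      ((cycleGraph (m+3)).Adj (T k) (T (k+1)) ∨ T k = T (k+1)) ∧
      ((cycleGraph (m+3)).Adj (S k) (S (k+1)) ↔ T k = T (k+1)) := by
    intro k _
    rcases Nat.even_or_odd k with ⟨t, rfl⟩ | ⟨t, rfl⟩
    · have e1 : S (t+t) = a + ε * ((t : ℕ) : Fin (m+3)) := by
        simp only [hS]; rw [show (t+t+1)/2 = t by omega]
      have e2 : S (t+t+1) = a + ε * (((t+1 : ℕ)) : Fin (m+3)) := by
        simp only [hS]; rw [show (t+t+1+1)/2 = t+1 by omega]
      have e3 : T (t+t) = b + ε * ((t : ℕ) : Fin (m+3)) := by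
        simp only [hT]; rw [show (t+t)/2 = t by omega]
      have e4 : T (t+t+1) = b + ε * ((t : ℕ) : Fin (m+3)) := by
        simp only [hT]; rw [show (t+t+1)/2 = t by omega]
      rw [e1, e2, e3, e4]
      have hAdj : (cycleGraph (m+3)).Adj (a + ε * ((t : ℕ) : Fin (m+3)))
          (a + ε * (((t+1 : ℕ)) : Fin (m+3))) := by
        rw [← hmove a t]; exact hadj _
      exact ⟨Or.inl hAdj, Or.inr rfl, iff_of_true hAdj rfl⟩
    · have e1 : S (2*t+1) = a + ε * (((t+1 : ℕ)) : Fin (m+3)) := by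
        simp only [hS]; rw [show (2*t+1+1)/2 = t+1 by omega]
      have e2 : S (2*t+1+1) = a + ε * (((t+1 : ℕ)) : Fin (m+3)) := by
        simp only [hS]; rw [show (2*t+1+1+1)/2 = t+1 by omega]
      have e3 : T (2*t+1) = b + ε * ((t : ℕ) : Fin (m+3)) := by
        simp only [hT]; rw [show (2*t+1)/2 = t by omega]
      have e4 : T (2*t+1+1) = b + ε * (((t+1 : ℕ)) : Fin (m+3)) := by
        simp only [hT]; rw [show (2*t+1+1)/2 = t+1 by omega]
      rw [e1, e2, e3, e4]
      have hAdj : (cycleGraph (m+3)).Adj (b + ε * ((t : ℕ) : Fin (m+3)))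
          (b + ε * (((t+1 : ℕ)) : Fin (m+3))) := by
        rw [← hmove b t]; exact hadj _
      exact ⟨Or.inr rfl, Or.inl hAdj,
        iff_of_false (fun hc => (cycleGraph (m+3)).irrefl hc) hAdj.ne⟩
  have steps := fun i hi => ext_step2 (m' := 2*(m+3))
    (Q := fun x1 x2 y1 y2 => ((cycleGraph (m+3)).Adj x1 x2 ∨ x1 = x2) ∧
      ((cycleGraph (m+3)).Adj y1 y2 ∨ y1 = y2) ∧ ((cycleGraph (m+3)).Adj x1 x2 ↔ y1 = y2))
    hl hS0 hT0 (fun i hi => ⟨hf.2 i hi, hg.2 i hi, hop i hi⟩) hST i hi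
  have hcovS : ∀ e ∈ (cycleGraph (m+3)).edgeSet, ∃ k, k + 1 ≤ 2*(m+3) ∧
      e = s(S k, S (k+1)) := by
    intro e he
    obtain ⟨x, rfl⟩ := edge_form he
    obtain ⟨t, ht, hte⟩ := cover hε a x
    refine ⟨2*t, by omega, ?_⟩
    have e1 : S (2*t) = a + ε * ((t : ℕ) : Fin (m+3)) := by
      simp only [hS]; rw [show (2*t+1)/2 = t by omega]
    have e2 : S (2*t+1) = a + ε * (((t+1 : ℕ)) : Fin (m+3)) := by
      simp only [hS]; rw [show (2*t+1+1)/2 = t+1 by omega]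
    rw [e1, e2]
    exact hte
  have hcovT : ∀ e ∈ (cycleGraph (m+3)).edgeSet, ∃ k, k + 1 ≤ 2*(m+3) ∧
      e = s(T k, T (k+1)) := by
    intro e he
    obtain ⟨x, rfl⟩ := edge_form he
    obtain ⟨t, ht, hte⟩ := cover hε b x
    refine ⟨2*t+1, by omega, ?_⟩
    have e1 : T (2*t+1) = b + ε * ((t : ℕ) : Fin (m+3)) := by
      simp only [hT]; rw [show (2*t+1)/2 = t by omega]
    have e2 : T (2*t+1+1) = b + ε * (((t+1 : ℕ)) : Fin (m+3)) := by
      simp only [hT]; rw [show (2*t+1+1)/2 = t+1 by omega]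
    rw [e1, e2]
    exact hte
  refine ⟨ext (2*(m+3)) f S, ext (2*(m+3)) g T,
    ⟨⟨ext_surj hf.1, fun i hi => (steps i hi).1⟩, ext_sweep hl hS0 hcovS⟩,
    ⟨⟨ext_surj hg.1, fun i hi => (steps i hi).2.1⟩, ext_sweep hl hT0 hcovT⟩,
    fun i hi => (steps i hi).2.2, ?_⟩
  refine le_mDist (by omega) fun i => ?_
  by_cases h : i.val < l
  · have hF : ext (2*(m+3)) f S i = f ⟨i.val, h⟩ := ext_lt h i.isLt
    have hG : ext (2*(m+3)) g T i = g ⟨i.val, h⟩ := ext_lt h i.isLt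
    rw [hF, hG]
    exact mDist_le _
  · have hF : ext (2*(m+3)) f S i = S (i.val - (l-1)) := ext_val hl hS0 (by omega) i.isLt
    have hG : ext (2*(m+3)) g T i = T (i.val - (l-1)) := ext_val hl hT0 (by omega) i.isLt
    rw [hF, hG]
    rcases Nat.even_or_odd (i.val - (l-1)) with ⟨t, he⟩ | ⟨t, he⟩
    · rw [he]
      have e1 : S (t+t) = a + ε * ((t : ℕ) : Fin (m+3)) := by
        simp only [hS]; rw [show (t+t+1)/2 = t by omega]
      have e3 : T (t+t) = b + ε * ((t : ℕ) : Fin (m+3)) := by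
        simp only [hT]; rw [show (t+t)/2 = t by omega]
      rw [e1, e3, dist_add, dist_off]
      exact hdl
    · rw [he]
      have e1 : S (2*t+1) = a + ε * (((t+1 : ℕ)) : Fin (m+3)) := by
        simp only [hS]; rw [show (2*t+1+1)/2 = t+1 by omega]
      have e3 : T (2*t+1) = b + ε * ((t : ℕ) : Fin (m+3)) := by
        simp only [hT]; rw [show (2*t+1)/2 = t by omega]
      rw [e1, e3, dist_off]
      have heq : b + ε * ((t : ℕ) : Fin (m+3)) - (a + ε * (((t+1 : ℕ)) : Fin (m+3)))
          = (b - a) - ε := by push_cast; ring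
      rw [heq]
      exact hdce




private def base (m : ℕ) : Fin ((m+3)+1) → Fin (m+3) := fun j => ((j.val : ℕ) : Fin (m+3))

private lemma base_sweep : IsSweep (cycleGraph (m+3)) (base m) := by
  refine ⟨⟨fun v => ⟨⟨v.val, by have := v.isLt; omega⟩, Fin.cast_val_eq_self v⟩,
    fun i hi => ?_⟩, fun e he => ?_⟩
  · show (cycleGraph (m+3)).Adj ((i : ℕ) : Fin (m+3)) (((i+1 : ℕ)) : Fin (m+3))
    rw [Nat.cast_add_one]
    exact adj_succ _
  · obtain ⟨x, rfl⟩ := edge_form he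
    refine ⟨x.val, by have := x.isLt; omega, ?_⟩
    show s(x, x+1) = s(((x.val : ℕ) : Fin (m+3)), (((x.val + 1 : ℕ)) : Fin (m+3)))
    rw [Nat.cast_add_one, Fin.cast_val_eq_self]

private def baseF (m : ℕ) : Fin (2*(m+3)+2) → Fin (m+3) :=
  fun j => (((j.val+1)/2 : ℕ) : Fin (m+3))

private def baseG (m : ℕ) : Fin (2*(m+3)+2) → Fin (m+3) :=
  fun j => ((j.val/2 : ℕ) : Fin (m+3))

private lemma base_cart :
    IsLazySweep (cycleGraph (m+3)) (baseF m) ∧ IsLazySweep (cycleGraph (m+3)) (baseG m) ∧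
      IsOpposite (cycleGraph (m+3)) (baseF m) (baseG m) := by
  have hstep : ∀ i : ℕ, ∀ hi : i + 1 < 2*(m+3)+2,
      ((cycleGraph (m+3)).Adj (baseF m ⟨i, Nat.lt_of_succ_lt hi⟩) (baseF m ⟨i+1, hi⟩) ∨
        baseF m ⟨i, Nat.lt_of_succ_lt hi⟩ = baseF m ⟨i+1, hi⟩) ∧
      ((cycleGraph (m+3)).Adj (baseG m ⟨i, Nat.lt_of_succ_lt hi⟩) (baseG m ⟨i+1, hi⟩) ∨
        baseG m ⟨i, Nat.lt_of_succ_lt hi⟩ = baseG m ⟨i+1, hi⟩) ∧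
      ((cycleGraph (m+3)).Adj (baseF m ⟨i, Nat.lt_of_succ_lt hi⟩) (baseF m ⟨i+1, hi⟩) ↔
        baseG m ⟨i, Nat.lt_of_succ_lt hi⟩ = baseG m ⟨i+1, hi⟩) := by
    intro i hi
    rcases Nat.even_or_odd i with ⟨t, rfl⟩ | ⟨t, rfl⟩
    · have e1 : baseF m ⟨t+t, Nat.lt_of_succ_lt hi⟩ = ((t : ℕ) : Fin (m+3)) := by
        show (((t+t+1)/2 : ℕ) : Fin (m+3)) = _
        rw [show (t+t+1)/2 = t by omega]
      have e2 : baseF m ⟨t+t+1, hi⟩ = (((t+1 : ℕ)) : Fin (m+3)) := by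
        show (((t+t+1+1)/2 : ℕ) : Fin (m+3)) = _
        rw [show (t+t+1+1)/2 = t+1 by omega]
      have e3 : baseG m ⟨t+t, Nat.lt_of_succ_lt hi⟩ = ((t : ℕ) : Fin (m+3)) := by
        show (((t+t)/2 : ℕ) : Fin (m+3)) = _
        rw [show (t+t)/2 = t by omega]
      have e4 : baseG m ⟨t+t+1, hi⟩ = ((t : ℕ) : Fin (m+3)) := by
        show (((t+t+1)/2 : ℕ) : Fin (m+3)) = _
        rw [show (t+t+1)/2 = t by omega]
      rw [e1, e2, e3, e4]
      have hAdj : (cycleGraph (m+3)).Adj ((t : ℕ) : Fin (m+3)) (((t+1 : ℕ)) : Fin (m+3)) := by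
        rw [Nat.cast_add_one]; exact adj_succ _
      exact ⟨Or.inl hAdj, Or.inr rfl, iff_of_true hAdj rfl⟩
    · have e1 : baseF m ⟨2*t+1, Nat.lt_of_succ_lt hi⟩ = (((t+1 : ℕ)) : Fin (m+3)) := by
        show (((2*t+1+1)/2 : ℕ) : Fin (m+3)) = _
        rw [show (2*t+1+1)/2 = t+1 by omega]
      have e2 : baseF m ⟨2*t+1+1, hi⟩ = (((t+1 : ℕ)) : Fin (m+3)) := by
        show (((2*t+1+1+1)/2 : ℕ) : Fin (m+3)) = _
        rw [show (2*t+1+1+1)/2 = t+1 by omega]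
      have e3 : baseG m ⟨2*t+1, Nat.lt_of_succ_lt hi⟩ = ((t : ℕ) : Fin (m+3)) := by
        show (((2*t+1)/2 : ℕ) : Fin (m+3)) = _
        rw [show (2*t+1)/2 = t by omega]
      have e4 : baseG m ⟨2*t+1+1, hi⟩ = (((t+1 : ℕ)) : Fin (m+3)) := by
        show (((2*t+1+1)/2 : ℕ) : Fin (m+3)) = _
        rw [show (2*t+1+1)/2 = t+1 by omega]
      rw [e1, e2, e3, e4]
      have hAdj : (cycleGraph (m+3)).Adj ((t : ℕ) : Fin (m+3)) (((t+1 : ℕ)) : Fin (m+3)) := by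
        rw [Nat.cast_add_one]; exact adj_succ _
      exact ⟨Or.inr rfl, Or.inl hAdj,
        iff_of_false (fun hc => (cycleGraph (m+3)).irrefl hc) hAdj.ne⟩
  refine ⟨⟨⟨fun v => ⟨⟨2*v.val, by have := v.isLt; omega⟩, ?_⟩, fun i hi => (hstep i hi).1⟩, ?_⟩,
    ⟨⟨fun v => ⟨⟨2*v.val, by have := v.isLt; omega⟩, ?_⟩, fun i hi => (hstep i hi).2.1⟩, ?_⟩,
    fun i hi => (hstep i hi).2.2⟩
  · show (((2*v.val+1)/2 : ℕ) : Fin (m+3)) = v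
    rw [show (2*v.val+1)/2 = v.val by omega, Fin.cast_val_eq_self]
  · intro e he
    obtain ⟨x, rfl⟩ := edge_form he
    refine ⟨2*x.val, by have := x.isLt; omega, ?_⟩
    have e1 : baseF m ⟨2*x.val, by have := x.isLt; omega⟩ = x := by
      show (((2*x.val+1)/2 : ℕ) : Fin (m+3)) = x
      rw [show (2*x.val+1)/2 = x.val by omega, Fin.cast_val_eq_self]
    have e2 : baseF m ⟨2*x.val+1, by have := x.isLt; omega⟩ = x + 1 := by
      show (((2*x.val+1+1)/2 : ℕ) : Fin (m+3)) = x + 1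
      rw [show (2*x.val+1+1)/2 = x.val+1 by omega, Nat.cast_add_one, Fin.cast_val_eq_self]
    rw [e1, e2]
  · show (((2*v.val)/2 : ℕ) : Fin (m+3)) = v
    rw [show (2*v.val)/2 = v.val by omega, Fin.cast_val_eq_self]
  · intro e he
    obtain ⟨x, rfl⟩ := edge_form he
    refine ⟨2*x.val+1, by have := x.isLt; omega, ?_⟩
    have e1 : baseG m ⟨2*x.val+1, by have := x.isLt; omega⟩ = x := by
      show (((2*x.val+1)/2 : ℕ) : Fin (m+3)) = x
      rw [show (2*x.val+1)/2 = x.val by omega, Fin.cast_val_eq_self]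
    have e2 : baseG m ⟨2*x.val+1+1, by have := x.isLt; omega⟩ = x + 1 := by
      show (((2*x.val+1+1)/2 : ℕ) : Fin (m+3)) = x + 1
      rw [show (2*x.val+1+1)/2 = x.val+1 by omega, Nat.cast_add_one, Fin.cast_val_eq_self]
    rw [e1, e2]

private lemma span_eq (S T : Set ℕ) (hST : T ⊆ S) (B : ℕ) (hbdd : ∀ d ∈ S, d ≤ B)
    (hne : T.Nonempty) (hext : ∀ d ∈ S, ∃ d' ∈ T, d ≤ d') : sSup S = sSup T := by
  have hbS : BddAbove S := ⟨B, hbdd⟩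
  have hbT : BddAbove T := hbS.mono hST
  refine le_antisymm (csSup_le (hne.mono hST) fun d hd => ?_) (csSup_le_csSup hbS hne hST)
  obtain ⟨d', hd', hdd⟩ := hext d hd
  exact hdd.trans (le_csSup hbT hd')

end SpanCycleAux

theorem stmt5 (n : ℕ) (hn : 3 ≤ n) :
    strongVertexSpan (SimpleGraph.cycleGraph n) = strongEdgeSpan (SimpleGraph.cycleGraph n) ∧
      directVertexSpan (SimpleGraph.cycleGraph n) = directEdgeSpan (SimpleGraph.cycleGraph n) ∧
        cartesianVertexSpan (SimpleGraph.cycleGraph n) =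
          cartesianEdgeSpan (SimpleGraph.cycleGraph n) := by
  open SpanCycleAux in
  obtain ⟨m, rfl⟩ : ∃ m, n = m + 3 := ⟨n - 3, by omega⟩
  refine ⟨?_, ?_, ?_⟩
  · -- strong
    refine span_eq _ _ ?_ (m+3) ?_ ?_ ?_
    · rintro d ⟨l, f, g, hf, hg, rfl⟩
      exact ⟨l, f, g, hf.1, hg.1, rfl⟩
    · rintro d ⟨l, f, g, hf, hg, rfl⟩
      obtain ⟨i0, -⟩ := hf.1 0
      exact (mDist_le i0).trans (dist_le_bound _ _)
    · exact ⟨_, ⟨(m+3)+1, base m, base m, sweep_to_lazy base_sweep,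
        sweep_to_lazy base_sweep, rfl⟩⟩
    · rintro d ⟨l, f, g, hf, hg, rfl⟩
      obtain ⟨F, G', hFs, hGs, hFstep, hGstep, hFsw, hGsw, hle⟩ :=
        extend_sd (P := fun x y => (cycleGraph (m+3)).Adj x y ∨ x = y)
          (fun _ _ h => Or.inl h) hf.1 hg.1 hf.2 hg.2
      exact ⟨_, ⟨_, F, G', ⟨⟨hFs, hFstep⟩, hFsw⟩, ⟨⟨hGs, hGstep⟩, hGsw⟩, rfl⟩, hle⟩
  · -- direct
    refine span_eq _ _ ?_ (m+3) ?_ ?_ ?_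
    · rintro d ⟨l, f, g, hf, hg, rfl⟩
      exact ⟨l, f, g, hf.1, hg.1, rfl⟩
    · rintro d ⟨l, f, g, hf, hg, rfl⟩
      obtain ⟨i0, -⟩ := hf.1 0
      exact (mDist_le i0).trans (dist_le_bound _ _)
    · exact ⟨_, ⟨(m+3)+1, base m, base m, base_sweep, base_sweep, rfl⟩⟩
    · rintro d ⟨l, f, g, hf, hg, rfl⟩
      obtain ⟨F, G', hFs, hGs, hFstep, hGstep, hFsw, hGsw, hle⟩ :=
        extend_sd (P := fun x y => (cycleGraph (m+3)).Adj x y)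
          (fun _ _ h => h) hf.1 hg.1 hf.2 hg.2
      exact ⟨_, ⟨_, F, G', ⟨⟨hFs, hFstep⟩, hFsw⟩, ⟨⟨hGs, hGstep⟩, hGsw⟩, rfl⟩, hle⟩
  · -- cartesian
    refine span_eq _ _ ?_ (m+3) ?_ ?_ ?_
    · rintro d ⟨l, f, g, hf, hg, hop, rfl⟩
      exact ⟨l, f, g, hf.1, hg.1, hop, rfl⟩
    · rintro d ⟨l, f, g, hf, hg, hop, rfl⟩
      obtain ⟨i0, -⟩ := hf.1 0
      exact (mDist_le i0).trans (dist_le_bound _ _)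
    · exact ⟨_, ⟨2*(m+3)+2, baseF m, baseG m, base_cart.1, base_cart.2.1,
        base_cart.2.2, rfl⟩⟩
    · rintro d ⟨l, f, g, hf, hg, hop, rfl⟩
      obtain ⟨F, G', hF, hG, hFG, hle⟩ := extend_cart hf hg hop
      exact ⟨_, ⟨_, F, G', hF, hG, hFG, rfl⟩, hle⟩
end

section
/- For every n ≥ 4, the graph K_n^+ satisfies σ⊠_V(K_n^+) = σ⊠_E(K_n^+) = 2. -/
open SimpleGraph

/-- `K_n^+`: the complete graph `K_n` (on `Fin n`, with `v_1 = 0` and `v_n = n-1`)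
with the edge `v_1 v_n` subdivided through the new vertex `w = Sum.inr ()`. -/
def KnPlus (n : ℕ) : SimpleGraph (Fin n ⊕ Unit) :=
  SimpleGraph.fromRel (fun a b =>
    match a, b with
    | Sum.inl i, Sum.inl j =>
        ¬((i.val = 0 ∧ j.val = n - 1) ∨ (i.val = n - 1 ∧ j.val = 0))
    | Sum.inl i, Sum.inr _ => i.val = 0 ∨ i.val = n - 1
    | Sum.inr _, _ => False)

variable {n : ℕ}

lemma adj_inl_inl {i j : Fin n} : (KnPlus n).Adj (.inl i) (.inl j) ↔
    (i.val ≠ j.val ∧ ¬(i.val = 0 ∧ j.val = n-1) ∧ ¬(i.val = n-1 ∧ j.val = 0)) := by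
  simp only [KnPlus, SimpleGraph.fromRel_adj, ne_eq, Sum.inl.injEq, ← Fin.val_ne_iff]
  tauto

lemma adj_inl_inr {i : Fin n} {u : Unit} : (KnPlus n).Adj (.inl i) (.inr u) ↔
    (i.val = 0 ∨ i.val = n-1) := by
  simp [KnPlus, SimpleGraph.fromRel_adj]

lemma adj_inr_inl {i : Fin n} {u : Unit} : (KnPlus n).Adj (.inr u) (.inl i) ↔
    (i.val = 0 ∨ i.val = n-1) := by
  rw [SimpleGraph.adj_comm]; exact adj_inl_inr

lemma not_adj_inr_inr {u u' : Unit} : ¬ (KnPlus n).Adj (.inr u) (.inr u') := by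
  simp [KnPlus, SimpleGraph.fromRel_adj]

abbrev Vt (n : ℕ) := Fin n ⊕ Unit

lemma two_le_dist {G : SimpleGraph (Vt n)} {a b : Vt n} (h1 : a ≠ b) (h2 : ¬ G.Adj a b)
    (h3 : G.Reachable a b) : 2 ≤ G.dist a b := by
  have h0 := h3.pos_dist_of_ne h1
  have h1' : G.dist a b ≠ 1 := fun h => h2 (SimpleGraph.dist_eq_one_iff_adj.mp h)
  omega

section

def vz (hn : 4 ≤ n) : Vt n := Sum.inl ⟨0, by omega⟩
def vL (hn : 4 ≤ n) : Vt n := Sum.inl ⟨n-1, by omega⟩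
def wv : Vt n := Sum.inr ()

lemma adj_z_w (hn : 4 ≤ n) : (KnPlus n).Adj (vz hn) wv := by
  simp [vz, wv, adj_inl_inr]

lemma adj_L_w (hn : 4 ≤ n) : (KnPlus n).Adj (vL hn) wv := by
  simp [vL, wv, adj_inl_inr]

lemma adj_z_inner (hn : 4 ≤ n) {i : Fin n} (h1 : i.val ≠ 0) (h2 : i.val ≠ n-1) :
    (KnPlus n).Adj (vz hn) (.inl i) := by
  simp only [vz, adj_inl_inl]; omega

lemma adj_L_inner (hn : 4 ≤ n) {i : Fin n} (h1 : i.val ≠ 0) (h2 : i.val ≠ n-1) :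
    (KnPlus n).Adj (vL hn) (.inl i) := by
  simp only [vL, adj_inl_inl]; omega

lemma dist_z_L (hn : 4 ≤ n) : (KnPlus n).dist (vz hn) (vL hn) = 2 := by
  let p : (KnPlus n).Walk (vz hn) (vL hn) :=
    .cons (adj_z_w hn) (.cons ((KnPlus n).adj_symm (adj_L_w hn)) .nil)
  have hl : p.length = 2 := rfl
  refine le_antisymm (hl ▸ SimpleGraph.dist_le p) (two_le_dist ?_ ?_ p.reachable)
  · simp only [vz, vL, ne_eq, Sum.inl.injEq, Fin.mk.injEq]; omega
  · simp only [vz, vL, adj_inl_inl]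
    simp

lemma dist_w_inner (hn : 4 ≤ n) {i : Fin n} (h1 : i.val ≠ 0) (h2 : i.val ≠ n-1) :
    (KnPlus n).dist (.inl i) wv = 2 := by
  let p : (KnPlus n).Walk (Sum.inl i : Vt n) wv :=
    .cons ((KnPlus n).adj_symm (adj_z_inner hn h1 h2)) (.cons (adj_z_w hn) .nil)
  have hl : p.length = 2 := rfl
  refine le_antisymm (hl ▸ SimpleGraph.dist_le p) (two_le_dist ?_ ?_ p.reachable)
  · simp [wv]
  · simp only [wv, adj_inl_inr]; omega

def phi (hn : 4 ≤ n) : Vt n → Vt n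
  | .inl i => if i.val = 0 then vL hn else if i.val = n - 1 then vz hn else wv
  | .inr _ => Sum.inl ⟨1, by omega⟩

lemma dist_phi (hn : 4 ≤ n) (x : Vt n) : (KnPlus n).dist x (phi hn x) = 2 := by
  cases x with
  | inr u =>
    have : (phi hn (Sum.inr u) : Vt n) = Sum.inl ⟨1, by omega⟩ := rfl
    rw [this, SimpleGraph.dist_comm]
    exact dist_w_inner hn (by simp) (by simp; omega)
  | inl i =>
    by_cases h0 : i.val = 0
    · have hi : Sum.inl i = vz hn := by simp [vz]; exact Fin.ext h0
      rw [hi]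
      have : phi hn (vz hn) = vL hn := by simp [phi, vz]
      rw [this]; exact dist_z_L hn
    · by_cases hL : i.val = n - 1
      · have hi : Sum.inl i = vL hn := by simp [vL]; exact Fin.ext hL
        rw [hi]
        have : phi hn (vL hn) = vz hn := by simp [phi, vL]; omega
        rw [this, SimpleGraph.dist_comm]
        exact dist_z_L hn
      · have : phi hn (Sum.inl i) = wv := by simp [phi, h0, hL]
        rw [this]; exact dist_w_inner hn h0 hL

def KRel (n : ℕ) (a b : Vt n) : Prop := (KnPlus n).Adj a b ∨ a = b

lemma rel_phi (hn : 4 ≤ n) {a b : Vt n} (h : KRel n a b) : KRel n (phi hn a) (phi hn b) := by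
  rcases h with h | rfl
  · cases a with
    | inr u => cases b with
      | inr u' => exact absurd h (not_adj_inr_inr)
      | inl j =>
        rw [adj_inr_inl] at h
        left
        have ha : (phi hn (Sum.inr u) : Vt n) = Sum.inl ⟨1, by omega⟩ := rfl
        rcases h with h | h
        · have hb : phi hn (Sum.inl j) = vL hn := by simp [phi, h]
          rw [ha, hb]
          exact (KnPlus n).adj_symm (adj_L_inner hn (by simp) (by simp; omega))
        · have hb : phi hn (Sum.inl j) = vz hn := by simp [phi, h]; omega
          rw [ha, hb]
          exact (KnPlus n).adj_symm (adj_z_inner hn (by simp) (by simp; omega))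
    | inl i => cases b with
      | inr u =>
        rw [adj_inl_inr] at h
        left
        have hb : (phi hn (Sum.inr u) : Vt n) = Sum.inl ⟨1, by omega⟩ := rfl
        rcases h with h | h
        · have ha : phi hn (Sum.inl i) = vL hn := by simp [phi, h]
          rw [ha, hb]
          exact adj_L_inner hn (by simp) (by simp; omega)
        · have ha : phi hn (Sum.inl i) = vz hn := by simp [phi, h]; omega
          rw [ha, hb]
          exact adj_z_inner hn (by simp) (by simp; omega)
      | inl j =>
        rw [adj_inl_inl] at h
        obtain ⟨hne, hf1, hf2⟩ := h
        by_cases h0 : i.val = 0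
        · have ha : phi hn (Sum.inl i) = vL hn := by simp [phi, h0]
          have hj0 : j.val ≠ 0 := by omega
          have hjL : j.val ≠ n - 1 := by omega
          have hb : phi hn (Sum.inl j) = wv := by simp [phi, hj0, hjL]
          rw [ha, hb]; left; exact adj_L_w hn
        · by_cases hL : i.val = n - 1
          · have ha : phi hn (Sum.inl i) = vz hn := by simp [phi, hL]; omega
            have hj0 : j.val ≠ 0 := by omega
            have hjL : j.val ≠ n - 1 := by omega
            have hb : phi hn (Sum.inl j) = wv := by simp [phi, hj0, hjL]
            rw [ha, hb]; left; exact adj_z_w hn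
          · have ha : phi hn (Sum.inl i) = wv := by simp [phi, h0, hL]
            by_cases hj0 : j.val = 0
            · have hb : phi hn (Sum.inl j) = vL hn := by simp [phi, hj0]
              rw [ha, hb]; left; exact (KnPlus n).adj_symm (adj_L_w hn)
            · by_cases hjL : j.val = n - 1
              · have hb : phi hn (Sum.inl j) = vz hn := by simp [phi, hjL]; omega
                rw [ha, hb]; left; exact (KnPlus n).adj_symm (adj_z_w hn)
              · have hb : phi hn (Sum.inl j) = wv := by simp [phi, hj0, hjL]
                rw [ha, hb]; right; rfl
  · right; rfl

lemma dist_le_of_walk2 {G : SimpleGraph (Vt n)} {a b : Vt n} (p : G.Walk a b)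
    (h : p.length ≤ 2) : G.dist a b ≤ 2 := (SimpleGraph.dist_le p).trans h

lemma dist_le_two (hn : 4 ≤ n) (a b : Vt n) : (KnPlus n).dist a b ≤ 2 := by
  by_cases hab : a = b
  · rw [hab, SimpleGraph.dist_self]; omega
  cases a with
  | inr u => cases b with
    | inr u' => exact absurd rfl hab
    | inl j =>
      by_cases hj : j.val = 0 ∨ j.val = n - 1
      · exact dist_le_of_walk2 (.cons (adj_inr_inl.mpr hj) .nil) (by simp)
      · push_neg at hj
        refine dist_le_of_walk2 (.cons ((KnPlus n).adj_symm (adj_z_w hn))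
          (.cons (adj_z_inner hn hj.1 hj.2) .nil)) (by simp)
  | inl i => cases b with
    | inr u =>
      by_cases hi : i.val = 0 ∨ i.val = n - 1
      · exact dist_le_of_walk2 (.cons (adj_inl_inr.mpr hi) .nil) (by simp)
      · push_neg at hi
        refine dist_le_of_walk2 (.cons ((KnPlus n).adj_symm (adj_z_inner hn hi.1 hi.2))
          (.cons (adj_z_w hn) .nil)) (by simp; exact Nat.le_of_eq rfl)
    | inl j =>
      have hij : i.val ≠ j.val := fun h => hab (by rw [Fin.val_injective h])
      by_cases hf : (i.val = 0 ∧ j.val = n-1) ∨ (i.val = n-1 ∧ j.val = 0)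
      · have ha : (KnPlus n).Adj (Sum.inl i) wv := adj_inl_inr.mpr (by omega)
        have hb : (KnPlus n).Adj wv (Sum.inl j) := adj_inr_inl.mpr (by omega)
        exact dist_le_of_walk2 (.cons ha (.cons hb .nil)) (by simp)
      · exact dist_le_of_walk2 (.cons (adj_inl_inl.mpr ⟨hij, by tauto, by tauto⟩) .nil) (by simp)

lemma krel_refl (x : Vt n) : KRel n x x := Or.inr rfl

lemma krel_symm {a b : Vt n} (h : KRel n a b) : KRel n b a := by
  rcases h with h | h
  · exact Or.inl ((KnPlus n).adj_symm h)
  · exact Or.inr h.symm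

def q (hn : 4 ≤ n) (x : Vt n) : List (Vt n) :=
  match x with
  | .inr _ => [vz hn, wv]
  | .inl i => if i.val = 0 then [vz hn]
      else if i.val = n - 1 then [vz hn, wv, vL hn]
      else [vz hn, Sum.inl i]

lemma q_head (hn : 4 ≤ n) (x : Vt n) : (q hn x).head? = some (vz hn) := by
  cases x with
  | inr u => rfl
  | inl i =>
    by_cases h0 : i.val = 0
    · simp [q, h0]
    · by_cases hL : i.val = n - 1 <;> simp [q, h0, hL, show n - 1 ≠ 0 by omega]

lemma q_ne (hn : 4 ≤ n) (x : Vt n) : q hn x ≠ [] := by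
  cases x with
  | inr u => simp [q]
  | inl i =>
    by_cases h0 : i.val = 0
    · simp [q, h0]
    · by_cases hL : i.val = n - 1 <;> simp [q, h0, hL, show n - 1 ≠ 0 by omega]

lemma q_last (hn : 4 ≤ n) (x : Vt n) : (q hn x).getLast? = some x := by
  cases x with
  | inr u => rfl
  | inl i =>
    by_cases h0 : i.val = 0
    · have : Sum.inl i = vz hn := by
        simp only [vz, Sum.inl.injEq]; exact Fin.ext h0
      rw [this]; simp [q, vz]
    · by_cases hL : i.val = n - 1
      · have : Sum.inl i = vL hn := by
          simp only [vL, Sum.inl.injEq]; exact Fin.ext hL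
        rw [this]; simp [q, vL, h0, show n - 1 ≠ 0 by omega]
      · simp [q, h0, hL]

lemma q_chain (hn : 4 ≤ n) (x : Vt n) : List.Chain' (KRel n) (q hn x) := by
  cases x with
  | inr u =>
    simp only [q, List.Chain', List.isChain_cons_cons, List.isChain_singleton, and_true]
    exact Or.inl (adj_z_w hn)
  | inl i =>
    by_cases h0 : i.val = 0
    · simp [q, h0, List.Chain', List.isChain_singleton]
    · by_cases hL : i.val = n - 1
      · simp only [q, h0, hL, if_false, if_true, show (n - 1 = 0) = False by simp; omega,
          List.Chain', List.isChain_cons_cons, List.isChain_singleton, and_true]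
        exact ⟨Or.inl (adj_z_w hn), Or.inl ((KnPlus n).adj_symm (adj_L_w hn))⟩
      · simp only [q, h0, hL, if_false, List.Chain', List.isChain_cons_cons, List.isChain_singleton, and_true]
        exact Or.inl (adj_z_inner hn h0 hL)

open scoped Classical in
noncomputable def block (hn : 4 ≤ n) (a b : Vt n) : List (Vt n) :=
  if (KnPlus n).Adj a b then q hn a ++ [b] ++ (q hn b).reverse else [vz hn]

lemma block_head (hn : 4 ≤ n) (a b : Vt n) : (block hn a b).head? = some (vz hn) := by
  unfold block
  split
  · rw [List.append_assoc, List.head?_append, q_head]; rfl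
  · rfl

lemma block_last (hn : 4 ≤ n) (a b : Vt n) : (block hn a b).getLast? = some (vz hn) := by
  unfold block
  split
  · rw [List.getLast?_append, List.getLast?_reverse, q_head]
    simp
  · rfl

lemma block_ne (hn : 4 ≤ n) (a b : Vt n) : block hn a b ≠ [] := by
  intro h
  have := block_head hn a b
  rw [h] at this; simp at this

lemma block_chain (hn : 4 ≤ n) (a b : Vt n) : List.Chain' (KRel n) (block hn a b) := by
  unfold block
  split
  case isTrue hadj =>
    rw [List.append_assoc]
    refine List.isChain_append.mpr ⟨q_chain hn a, ?_, ?_⟩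
    · refine List.isChain_append.mpr ⟨List.isChain_singleton b, ?_, ?_⟩
      · rw [List.isChain_reverse]
        exact (q_chain hn b).imp fun _ _ h => krel_symm h
      · intro x hx y hy
        simp only [List.getLast?_singleton, Option.mem_def, Option.some.injEq] at hx
        rw [List.head?_reverse, q_last] at hy
        simp only [Option.mem_def, Option.some.injEq] at hy
        subst hx; subst hy; exact krel_refl _
    · intro x hx y hy
      rw [q_last] at hx
      rw [List.head?_append] at hy
      simp only [Option.mem_def, Option.some.injEq] at hx
      simp only [List.head?_cons, Option.or, Option.mem_def, Option.some.injEq] at hy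
      subst hx; subst hy; exact Or.inl hadj
  case isFalse => exact List.isChain_singleton _

lemma block_pair_infix (hn : 4 ≤ n) {a b : Vt n} (h : (KnPlus n).Adj a b) :
    [a, b] <:+: block hn a b := by
  unfold block
  rw [if_pos h]
  have hq := q_ne hn a
  have hlast : (q hn a).getLast hq = a := by
    have := q_last hn a
    rw [List.getLast?_eq_getLast hq] at this
    exact Option.some_injective _ this
  have hsplit : q hn a = (q hn a).dropLast ++ [a] := by
    conv_lhs => rw [← List.dropLast_append_getLast hq]
    rw [hlast]
  rw [hsplit]
  refine ⟨(q hn a).dropLast, (q hn b).reverse, by simp⟩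

lemma mem_block_left (hn : 4 ≤ n) {a b : Vt n} (h : (KnPlus n).Adj a b) :
    a ∈ block hn a b :=
  (block_pair_infix hn h).subset (by simp)

lemma mem_block_right (hn : 4 ≤ n) {a b : Vt n} (h : (KnPlus n).Adj a b) :
    b ∈ block hn a b :=
  (block_pair_infix hn h).subset (by simp)

lemma mem_block_vz (hn : 4 ≤ n) (a b : Vt n) : vz hn ∈ block hn a b := by
  have := block_head hn a b
  exact List.mem_of_mem_head? (by rw [this]; rfl)

def allV (n : ℕ) : List (Vt n) := ((List.finRange n).map Sum.inl) ++ [Sum.inr ()]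

lemma mem_allV (x : Vt n) : x ∈ allV n := by
  cases x with
  | inl i => exact List.mem_append_left _ (List.mem_map_of_mem (List.mem_finRange i))
  | inr u => exact List.mem_append_right _ (by simp)

def pairsL (n : ℕ) : List (Vt n × Vt n) := (allV n).flatMap (fun a => (allV n).map (fun b => (a, b)))

lemma mem_pairsL (a b : Vt n) : (a, b) ∈ pairsL n := by
  rw [pairsL, List.mem_flatMap]
  exact ⟨a, mem_allV a, List.mem_map_of_mem (mem_allV b)⟩

lemma pairsL_ne (hn : 4 ≤ n) : pairsL n ≠ [] :=
  List.ne_nil_of_mem (mem_pairsL (wv) (wv))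

lemma flat_chain {α β : Type*} {R : α → α → Prop} {c : α} (hc : R c c) (F : β → List α)
    (h1 : ∀ b, List.Chain' R (F b)) (h2 : ∀ b, (F b).head? = some c)
    (h3 : ∀ b, (F b).getLast? = some c) :
    ∀ L : List β, L ≠ [] → List.Chain' R (L.flatMap F) ∧
      (L.flatMap F).head? = some c ∧ (L.flatMap F).getLast? = some c := by
  intro L
  induction L with
  | nil => intro h; exact absurd rfl h
  | cons b L ih =>
    intro _
    rcases eq_or_ne L [] with rfl | hL
    · simp only [List.flatMap_cons, List.flatMap_nil, List.append_nil]
      exact ⟨h1 b, h2 b, h3 b⟩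
    · obtain ⟨ihc, ihh, ihl⟩ := ih hL
      rw [List.flatMap_cons]
      refine ⟨List.isChain_append.mpr ⟨h1 b, ihc, ?_⟩, ?_, ?_⟩
      · intro x hx y hy
        rw [h3 b] at hx; rw [ihh] at hy
        simp only [Option.mem_def, Option.some.injEq] at hx hy
        subst hx; subst hy; exact hc
      · rw [List.head?_append, h2 b]; rfl
      · rw [List.getLast?_append, ihl]; rfl

lemma infix_flatMap' {α β : Type*} (F : β → List α) {b : β} :
    ∀ {L : List β}, b ∈ L → F b <:+: L.flatMap F := by
  intro L h
  induction L with
  | nil => simp at h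
  | cons x L ih =>
    rw [List.flatMap_cons]
    rcases List.mem_cons.mp h with rfl | h'
    · exact ⟨[], L.flatMap F, by simp⟩
    · obtain ⟨s, t, hst⟩ := ih h'
      exact ⟨F x ++ s, t, by rw [← hst]; simp⟩

noncomputable def Wl (hn : 4 ≤ n) : List (Vt n) :=
  (pairsL n).flatMap (fun p => block hn p.1 p.2)

lemma Wl_props (hn : 4 ≤ n) : List.Chain' (KRel n) (Wl hn) ∧
    (Wl hn).head? = some (vz hn) ∧ (Wl hn).getLast? = some (vz hn) := by
  exact flat_chain (krel_refl (vz hn)) (fun p : Vt n × Vt n => block hn p.1 p.2)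
    (fun p => block_chain hn p.1 p.2) (fun p => block_head hn p.1 p.2)
    (fun p => block_last hn p.1 p.2) (pairsL n) (pairsL_ne hn)

lemma Wl_pair_infix (hn : 4 ≤ n) {a b : Vt n} (h : (KnPlus n).Adj a b) :
    [a, b] <:+: Wl hn := by
  have h2 := infix_flatMap' (fun p : Vt n × Vt n => block hn p.1 p.2) (mem_pairsL a b)
  exact (block_pair_infix hn h).trans h2

lemma mem_Wl (hn : 4 ≤ n) (x : Vt n) : x ∈ Wl hn := by
  have hsub : ∀ a b : Vt n, block hn a b ⊆ Wl hn := fun a b =>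
    (infix_flatMap' (fun p => block hn p.1 p.2) (mem_pairsL a b)).subset
  cases x with
  | inr u => exact hsub (vz hn) wv (mem_block_right hn (adj_z_w hn))
  | inl i =>
    by_cases h0 : i.val = 0
    · have : Sum.inl i = vz hn := by simp only [vz, Sum.inl.injEq]; exact Fin.ext h0
      rw [this]; exact hsub (vz hn) wv (mem_block_vz hn _ _)
    · by_cases hL : i.val = n - 1
      · have : Sum.inl i = vL hn := by simp only [vL, Sum.inl.injEq]; exact Fin.ext hL
        rw [this]; exact hsub wv (vL hn) (mem_block_right hn ((KnPlus n).adj_symm (adj_L_w hn)))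
      · exact hsub (vz hn) (Sum.inl i) (mem_block_right hn (adj_z_inner hn h0 hL))

lemma Wl_ne (hn : 4 ≤ n) : Wl hn ≠ [] := List.ne_nil_of_mem (mem_Wl hn wv)

def vone (hn : 4 ≤ n) : Vt n := Sum.inl ⟨1, by omega⟩

noncomputable def Fl (hn : 4 ≤ n) : List (Vt n) := Wl hn ++ [wv] ++ (Wl hn).map (phi hn)

noncomputable def Gl (hn : 4 ≤ n) : List (Vt n) := (Wl hn).map (phi hn) ++ [vone hn] ++ Wl hn

lemma length_Fl_Gl (hn : 4 ≤ n) : (Fl hn).length = (Gl hn).length := by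
  simp [Fl, Gl]
  try omega

lemma phi_vz (hn : 4 ≤ n) : phi hn (vz hn) = vL hn := by simp [phi, vz]

lemma chain_Fl (hn : 4 ≤ n) : List.Chain' (KRel n) (Fl hn) := by
  obtain ⟨hc, hh, hl⟩ := Wl_props hn
  rw [Fl, List.append_assoc]
  refine List.isChain_append.mpr ⟨hc, ?_, ?_⟩
  · refine List.isChain_append.mpr ⟨List.isChain_singleton _,
      List.isChain_map_of_isChain _ (fun a b h => rel_phi hn h) hc, ?_⟩
    intro x hx y hy
    simp only [List.getLast?_singleton, Option.mem_def, Option.some.injEq] at hx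
    rw [List.head?_map, hh] at hy
    simp only [Option.map_some, Option.mem_def, Option.some.injEq] at hy
    subst hx; subst hy
    rw [phi_vz hn]
    exact Or.inl ((KnPlus n).adj_symm (adj_L_w hn))
  · intro x hx y hy
    rw [hl] at hx
    simp only [Option.mem_def, Option.some.injEq] at hx
    rw [List.head?_append, List.head?_cons] at hy
    simp only [Option.or, Option.mem_def, Option.some.injEq] at hy
    subst hx; subst hy
    exact Or.inl (adj_z_w hn)

lemma chain_Gl (hn : 4 ≤ n) : List.Chain' (KRel n) (Gl hn) := by
  obtain ⟨hc, hh, hl⟩ := Wl_props hn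
  rw [Gl, List.append_assoc]
  refine List.isChain_append.mpr
    ⟨List.isChain_map_of_isChain _ (fun a b h => rel_phi hn h) hc, ?_, ?_⟩
  · refine List.isChain_append.mpr ⟨List.isChain_singleton _, hc, ?_⟩
    intro x hx y hy
    simp only [List.getLast?_singleton, Option.mem_def, Option.some.injEq] at hx
    rw [hh] at hy
    simp only [Option.mem_def, Option.some.injEq] at hy
    subst hx; subst hy
    exact Or.inl ((KnPlus n).adj_symm (adj_z_inner hn (by simp [vone]) (by simp [vone]; omega)))
  · intro x hx y hy
    rw [List.getLast?_map, hl] at hx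
    simp only [Option.map_some, Option.mem_def, Option.some.injEq] at hx
    rw [List.head?_append, List.head?_cons] at hy
    simp only [Option.or, Option.mem_def, Option.some.injEq] at hy
    subst hx; subst hy
    rw [phi_vz hn]
    exact Or.inl (adj_L_inner hn (by simp [vone]) (by simp [vone]; omega))

lemma getElem_triple_left {α : Type*} (A B C : List α) (i : ℕ) (h : i < A.length)
    {hT : i < (A ++ B ++ C).length} : (A ++ B ++ C)[i] = A[i] := by
  rw [List.getElem_append_left (by simp; omega), List.getElem_append_left h]

lemma getElem_triple_mid {α : Type*} (A B C : List α) (i : ℕ) (h1 : A.length ≤ i)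
    (h2 : i < A.length + B.length) {hT : i < (A ++ B ++ C).length} :
    (A ++ B ++ C)[i] = B[i - A.length]'(by omega) := by
  rw [List.getElem_append_left (by simp; omega), List.getElem_append_right h1]

lemma getElem_triple_right {α : Type*} (A B C : List α) (i : ℕ)
    (h1 : A.length + B.length ≤ i) {hT : i < (A ++ B ++ C).length}
    {h2 : i - (A.length + B.length) < C.length} :
    (A ++ B ++ C)[i] = C[i - (A.length + B.length)] := by
  rw [List.getElem_append_right (by simp; omega)]
  simp

lemma dist_FG' (hn : 4 ≤ n)
    (A : List (Vt n)) (hA : A = Wl hn) (i : ℕ)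
    (hF : i < (A ++ [wv] ++ A.map (phi hn)).length)
    (hG : i < (A.map (phi hn) ++ [vone hn] ++ A).length) :
    (KnPlus n).dist ((A ++ [wv] ++ A.map (phi hn))[i])
      ((A.map (phi hn) ++ [vone hn] ++ A)[i]) = 2 := by
  have hmap : (A.map (phi hn)).length = A.length := by simp
  have hlen : (A ++ [wv] ++ A.map (phi hn)).length = A.length + 1 + A.length := by
    simp only [List.length_append, List.length_map, List.length_singleton]
  rcases lt_trichotomy i A.length with hi | hi | hi
  · rw [getElem_triple_left _ _ _ i hi, getElem_triple_left _ _ _ i (by omega),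
      List.getElem_map]
    exact dist_phi hn _
  · rw [getElem_triple_mid _ _ _ i (by omega) (by simp; omega),
      getElem_triple_mid _ _ _ i (by omega) (by simp; omega)]
    simp only [List.getElem_singleton]
    rw [SimpleGraph.dist_comm]
    exact dist_w_inner hn (by simp [vone]) (by simp [vone]; omega)
  · rw [getElem_triple_right A [wv] (A.map (phi hn)) i (by simp; omega) (h2 := by simp; omega),
      getElem_triple_right (A.map (phi hn)) [vone hn] A i (by simp; omega) (h2 := by simp; omega)]
    rw [List.getElem_map]
    rw [SimpleGraph.dist_comm]
    have := dist_phi hn (A[i - ((A.map (phi hn)).length + [vone hn].length)]'(by simp; omega))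
    convert this using 3
    simp

lemma dist_FG (hn : 4 ≤ n) (i : ℕ) (hF : i < (Fl hn).length) (hG : i < (Gl hn).length) :
    (KnPlus n).dist ((Fl hn)[i]) ((Gl hn)[i]) = 2 :=
  dist_FG' hn (Wl hn) rfl i hF hG


lemma pair_get {α : Type*} {a b : α} {L : List α} (h : [a, b] <:+: L) :
    ∃ i : ℕ, ∃ h2 : i + 1 < L.length, L[i]'(Nat.lt_of_succ_lt h2) = a ∧ L[i+1]'h2 = b := by
  obtain ⟨s, t, rfl⟩ := h
  refine ⟨s.length, by simp, ?_, ?_⟩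
  · rw [getElem_triple_mid s [a,b] t s.length (le_refl _) (by simp)]
    simp
  · rw [getElem_triple_mid s [a,b] t (s.length + 1) (by omega) (by simp)]
    simp

lemma track_of_list (hn : 4 ≤ n) {L : List (Vt n)} (hchain : List.Chain' (KRel n) L)
    (hmem : ∀ x : Vt n, x ∈ L) :
    IsLazyTrack (KnPlus n) (fun i : Fin L.length => L.get i) := by
  constructor
  · intro x
    obtain ⟨i, hi⟩ := List.mem_iff_get.mp (hmem x)
    exact ⟨i, hi⟩
  · intro i hi
    exact List.isChain_iff_getElem.mp hchain i (by omega)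

lemma sweep_of_list (hn : 4 ≤ n) {L : List (Vt n)}
    (hcov : ∀ a b : Vt n, (KnPlus n).Adj a b → [a, b] <:+: L) :
    SweepCond (KnPlus n) (fun i : Fin L.length => L.get i) := by
  intro e he
  induction e using Sym2.ind with
  | _ a b =>
    have hadj : (KnPlus n).Adj a b := (KnPlus n).mem_edgeSet.mp he
    obtain ⟨i, h2, ha, hb⟩ := pair_get (hcov a b hadj)
    refine ⟨i, h2, ?_⟩
    simp only [List.get_eq_getElem]
    rw [ha, hb]

lemma Fl_cov (hn : 4 ≤ n) {a b : Vt n} (h : (KnPlus n).Adj a b) : [a, b] <:+: Fl hn :=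
  (Wl_pair_infix hn h).trans ⟨[], [wv] ++ (Wl hn).map (phi hn), by simp [Fl]⟩

lemma Gl_cov (hn : 4 ≤ n) {a b : Vt n} (h : (KnPlus n).Adj a b) : [a, b] <:+: Gl hn :=
  (Wl_pair_infix hn h).trans ⟨(Wl hn).map (phi hn) ++ [vone hn], [], by simp [Gl]⟩

lemma mem_Fl (hn : 4 ≤ n) (x : Vt n) : x ∈ Fl hn := by
  have : Wl hn <:+: Fl hn := ⟨[], [wv] ++ (Wl hn).map (phi hn), by simp [Fl]⟩
  exact this.subset (mem_Wl hn x)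

lemma mem_Gl (hn : 4 ≤ n) (x : Vt n) : x ∈ Gl hn := by
  have : Wl hn <:+: Gl hn := ⟨(Wl hn).map (phi hn) ++ [vone hn], [], by simp [Gl]⟩
  exact this.subset (mem_Wl hn x)

lemma mdist_le_two (hn : 4 ≤ n) {l : ℕ} (f g : Fin l → Vt n)
    (hf : Function.Surjective f) : mDist (KnPlus n) f g ≤ 2 := by
  obtain ⟨i, -⟩ := hf wv
  exact le_trans (Nat.sInf_le ⟨i, rfl⟩) (dist_le_two hn (f i) (g i))

lemma exists_sweeps (hn : 4 ≤ n) :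
    ∃ (l : ℕ) (f g : Fin l → Vt n), IsLazySweep (KnPlus n) f ∧ IsLazySweep (KnPlus n) g ∧
      mDist (KnPlus n) f g = 2 := by
  have hlen := length_Fl_Gl hn
  refine ⟨(Fl hn).length, fun i => (Fl hn).get i, fun i => (Gl hn).get (Fin.cast hlen i),
    ⟨track_of_list hn (chain_Fl hn) (mem_Fl hn), sweep_of_list hn (fun a b h => Fl_cov hn h)⟩,
    ?_, ?_⟩
  · have hG : IsLazySweep (KnPlus n) (fun i : Fin (Gl hn).length => (Gl hn).get i) :=
      ⟨track_of_list hn (chain_Gl hn) (mem_Gl hn), sweep_of_list hn (fun a b h => Gl_cov hn h)⟩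
    refine ⟨⟨?_, ?_⟩, ?_⟩
    · intro x
      obtain ⟨j, hj⟩ := hG.1.1 x
      refine ⟨Fin.cast hlen.symm j, ?_⟩
      exact hj
    · intro i hi
      exact hG.1.2 i (by omega)
    · intro e he
      obtain ⟨i, h2, hee⟩ := hG.2 e he
      exact ⟨i, by omega, hee⟩
  · have hpt : ∀ i : Fin (Fl hn).length,
        (KnPlus n).dist ((Fl hn).get i) ((Gl hn).get (Fin.cast hlen i)) = 2 :=
      fun i => dist_FG hn i.val i.isLt (by omega)
    have hpos : 0 < (Fl hn).length :=
      List.length_pos_iff.mpr (List.ne_nil_of_mem (mem_Fl hn wv))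
    refine le_antisymm (Nat.sInf_le ⟨⟨0, hpos⟩, hpt _⟩) (le_csInf ⟨2, ⟨⟨0, hpos⟩, hpt _⟩⟩ ?_)
    rintro b ⟨i, rfl⟩
    exact le_of_eq (hpt i).symm


theorem stmt6 (n : ℕ) (hn : 4 ≤ n) :
    strongVertexSpan (KnPlus n) = 2 ∧ strongEdgeSpan (KnPlus n) = 2 := by
  obtain ⟨l, f, g, hf, hg, hm⟩ := exists_sweeps hn
  have h2V : 2 ∈ {d | ∃ (l : ℕ) (f g : Fin l → Vt n),
      IsLazyTrack (KnPlus n) f ∧ IsLazyTrack (KnPlus n) g ∧ mDist (KnPlus n) f g = d} :=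
    ⟨l, f, g, hf.1, hg.1, hm⟩
  have h2E : 2 ∈ {d | ∃ (l : ℕ) (f g : Fin l → Vt n),
      IsLazySweep (KnPlus n) f ∧ IsLazySweep (KnPlus n) g ∧ mDist (KnPlus n) f g = d} :=
    ⟨l, f, g, hf, hg, hm⟩
  have hbV : ∀ d ∈ {d | ∃ (l : ℕ) (f g : Fin l → Vt n),
      IsLazyTrack (KnPlus n) f ∧ IsLazyTrack (KnPlus n) g ∧ mDist (KnPlus n) f g = d}, d ≤ 2 := by
    rintro d ⟨l', f', g', hf', hg', rfl⟩
    exact mdist_le_two hn f' g' hf'.1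
  have hbE : ∀ d ∈ {d | ∃ (l : ℕ) (f g : Fin l → Vt n),
      IsLazySweep (KnPlus n) f ∧ IsLazySweep (KnPlus n) g ∧ mDist (KnPlus n) f g = d}, d ≤ 2 := by
    rintro d ⟨l', f', g', hf', hg', rfl⟩
    exact mdist_le_two hn f' g' hf'.1.1
  constructor
  · exact le_antisymm (csSup_le ⟨2, h2V⟩ hbV) (le_csSup ⟨2, fun d hd => hbV d hd⟩ h2V)
  · exact le_antisymm (csSup_le ⟨2, h2E⟩ hbE) (le_csSup ⟨2, fun d hd => hbE d hd⟩ h2E)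
end
end
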